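/- arXiv:2310.20177 — 3 statements merged into one kernel-verified Lean document; each statement's English description precedes it below -/
import Mathlib

section
/- Let m ≥ 2 be an integer, β ∈ ℝ and B > 0. There exists a constant C > 0, depending only on m, β, Ω and B, such that for every positive even integer N, every trigonometric polynomial φ ∈ X_N with ‖φ‖_{H^m} ≤ B, and every 0 < τ < 1, one has ‖ φ·(e^{−iτβ|φ|²} − 1) ‖_{H^m} ≤ C τ. -/
open MeasureTheory
open scoped Real

noncomputable section

namespace GPE

/-- Frequencies μ_l = 2πl/(b−a). -/
def freq (a b : ℝ) (l : ℤ) : ℝ := 2 * Real.pi * l / (b - a)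

/-- The Fourier mode e^{iμ_l(x−a)}. -/
def eMode (a b : ℝ) (l : ℤ) (x : ℝ) : ℂ :=
  Complex.exp (Complex.I * ((freq a b l * (x - a) : ℝ) : ℂ))

/-- Index set 𝒯_N = {−N/2, …, N/2 − 1}. -/
def idxSet (N : ℕ) : Finset ℤ := Finset.Ico (-(N : ℤ) / 2) ((N : ℤ) / 2)

/-- l-th Fourier coefficient û_l = (1/(b−a)) ∫_a^b u(x) e^{−iμ_l(x−a)} dx. -/
def fourierCoeffOn (a b : ℝ) (u : ℝ → ℂ) (l : ℤ) : ℂ :=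
  ((b - a : ℝ) : ℂ)⁻¹ *
    ∫ x in a..b, u x * Complex.exp (-(Complex.I * ((freq a b l * (x - a) : ℝ) : ℂ)))

/-- L²-projection P_N u = Σ_{l∈𝒯_N} û_l e^{iμ_l(x−a)}. -/
def projN (a b : ℝ) (N : ℕ) (u : ℝ → ℂ) : ℝ → ℂ :=
  fun x => ∑ l ∈ idxSet N, fourierCoeffOn a b u l * eMode a b l x

/-- Grid points x_j = a + j(b−a)/N. -/
def gridPt (a b : ℝ) (N : ℕ) (j : ℕ) : ℝ := a + j * ((b - a) / N)

/-- Discrete Fourier coefficient ṽ_l = (1/N) Σ_{j=0}^{N−1} v(x_j) e^{−iμ_l(x_j−a)}. -/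
def discreteCoeff (a b : ℝ) (N : ℕ) (v : ℝ → ℂ) (l : ℤ) : ℂ :=
  (N : ℂ)⁻¹ * ∑ j ∈ Finset.range N,
    v (gridPt a b N j) * Complex.exp (-(Complex.I * ((freq a b l * (gridPt a b N j - a) : ℝ) : ℂ)))

/-- Trigonometric interpolation I_N v = Σ_{l∈𝒯_N} ṽ_l e^{iμ_l(x−a)}. -/
def interpN (a b : ℝ) (N : ℕ) (v : ℝ → ℂ) : ℝ → ℂ :=
  fun x => ∑ l ∈ idxSet N, discreteCoeff a b N v l * eMode a b l x

/-- The free Schrödinger flow composed with projection: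
 e^{isΔ} P_N u = Σ_{l∈𝒯_N} e^{−isμ_l²} û_l e^{iμ_l(x−a)}. -/
def freeFlow (a b : ℝ) (N : ℕ) (s : ℝ) (u : ℝ → ℂ) : ℝ → ℂ :=
  fun x => ∑ l ∈ idxSet N,
    Complex.exp (-(Complex.I * ((s * freq a b l ^ 2 : ℝ) : ℂ))) * fourierCoeffOn a b u l *
      eMode a b l x

/-- Membership in X_N = span{e^{iμ_l(x−a)} : l ∈ 𝒯_N}. -/
def MemXN (a b : ℝ) (N : ℕ) (φ : ℝ → ℂ) : Prop :=
  ∃ c : ℤ → ℂ, φ = fun x => ∑ l ∈ idxSet N, c l * eMode a b l x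

/-- The nonlinear-phase map φ ↦ φ e^{−iτβ|φ|²}. -/
def nlPhase (β τ : ℝ) (φ : ℝ → ℂ) : ℝ → ℂ :=
  fun x => φ x * Complex.exp (-(Complex.I * ((τ * β * ‖φ x‖ ^ 2 : ℝ) : ℂ)))

/-- The LTeFP numerical flow Φ_τ(φ) = e^{iτΔ} P_N( e^{−iτV} · I_N( φ e^{−iτβ|φ|²} ) ). -/
def PhiLTeFP (a b : ℝ) (N : ℕ) (V : ℝ → ℝ) (β τ : ℝ) (φ : ℝ → ℂ) : ℝ → ℂ :=
  freeFlow a b N τ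
    (fun x => Complex.exp (-(Complex.I * ((τ * V x : ℝ) : ℂ))) * interpN a b N (nlPhase β τ φ) x)

/-- The LTFS numerical flow S_τ(φ) = e^{iτΔ} P_N( e^{−iτ(V+β|φ|²)} φ ). -/
def SLTFS (a b : ℝ) (N : ℕ) (V : ℝ → ℝ) (β τ : ℝ) (φ : ℝ → ℂ) : ℝ → ℂ :=
  freeFlow a b N τ
    (fun x =>
      Complex.exp (-(Complex.I * ((τ * (V x + β * ‖φ x‖ ^ 2) : ℝ) : ℂ))) * φ x)

/-- The STeFP numerical flow: φ ↦ e^{i(τ/2)Δ} P_N( e^{−iτV} · I_N( φ₁ e^{−iτβ|φ₁|²} ) )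
with φ₁ = e^{i(τ/2)Δ} φ. -/
def PhiSTeFP (a b : ℝ) (N : ℕ) (V : ℝ → ℝ) (β τ : ℝ) (φ : ℝ → ℂ) : ℝ → ℂ :=
  freeFlow a b N (τ / 2)
    (fun x => Complex.exp (-(Complex.I * ((τ * V x : ℝ) : ℂ))) *
      interpN a b N (nlPhase β τ (freeFlow a b N (τ / 2) φ)) x)

/-- LTeFP iterates: I_N ψ̂⁰ = I_N ψ₀ and I_N ψ̂^{n+1} = Φ_τ(I_N ψ̂ⁿ). -/
def LTeFPiter (a b : ℝ) (N : ℕ) (V : ℝ → ℝ) (β τ : ℝ) (ψ0 : ℝ → ℂ) : ℕ → ℝ → ℂ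
  | 0 => interpN a b N ψ0
  | n + 1 => PhiLTeFP a b N V β τ (LTeFPiter a b N V β τ ψ0 n)

/-- STeFP iterates. -/
def STeFPiter (a b : ℝ) (N : ℕ) (V : ℝ → ℝ) (β τ : ℝ) (ψ0 : ℝ → ℂ) : ℕ → ℝ → ℂ
  | 0 => interpN a b N ψ0
  | n + 1 => PhiSTeFP a b N V β τ (STeFPiter a b N V β τ ψ0 n)

/-- Sobolev H^m norm on (a,b): ‖u‖_{H^m} = (Σ_{k≤m} ‖u^{(k)}‖²_{L²(a,b)})^{1/2}. -/
def sobNorm (a b : ℝ) (m : ℕ) (u : ℝ → ℂ) : ℝ :=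
  Real.sqrt (∑ k ∈ Finset.range (m + 1), ∫ x in a..b, ‖iteratedDeriv k u x‖ ^ 2)

/-- Periodic boundary conditions of order m: u^{(k)}(a) = u^{(k)}(b) for k = 0,…,m−1. -/
def PerBC (a b : ℝ) (m : ℕ) (u : ℝ → ℂ) : Prop :=
  ∀ k < m, iteratedDeriv k u a = iteratedDeriv k u b

/-- ψ (with time derivative ψt) solves the GPE i∂_tψ = −∂_x²ψ + Vψ + β|ψ|²ψ
on [0,T] × [a,b]. -/
def IsGPESolution (a b T : ℝ) (V : ℝ → ℝ) (β : ℝ) (ψ ψt : ℝ → ℝ → ℂ) : Prop :=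
  ∀ t ∈ Set.Icc 0 T, ∀ x ∈ Set.Icc a b,
    HasDerivAt (fun s => ψ s x) (ψt t x) t ∧
    Complex.I * ψt t x =
      -(iteratedDeriv 2 (ψ t) x) + ((V x + β * ‖ψ t x‖ ^ 2 : ℝ) : ℂ) * ψ t x

end GPE



open MeasureTheory intervalIntegral

lemma norm_exp_I_mul_sub_one_le (t : ℝ) : ‖Complex.exp (Complex.I * t) - 1‖ ≤ |t| := by
  have hd : ∀ s ∈ Set.uIcc (0:ℝ) t, HasDerivAt (fun s : ℝ => Complex.exp (Complex.I * s))
      (Complex.exp (Complex.I * s) * Complex.I) s := by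
    intro s _
    have h1 : HasDerivAt (fun s : ℝ => (Complex.I * (s : ℂ))) Complex.I s := by
      simpa using (Complex.ofRealCLM.hasDerivAt (x := s)).const_mul Complex.I
    simpa using h1.cexp
  have hint : IntervalIntegrable (fun s : ℝ => Complex.exp (Complex.I * s) * Complex.I)
      volume 0 t := (Continuous.intervalIntegrable (by fun_prop) _ _)
  have heq := intervalIntegral.integral_eq_sub_of_hasDerivAt hd hint
  have h2 : ‖Complex.exp (Complex.I * t) - 1‖
      = ‖∫ s in (0:ℝ)..t, Complex.exp (Complex.I * s) * Complex.I‖ := by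
    rw [heq]; simp
  rw [h2]
  have h3 := intervalIntegral.norm_integral_le_of_norm_le_const
    (C := 1) (f := fun s : ℝ => Complex.exp (Complex.I * s) * Complex.I) (a := 0) (b := t) ?_
  · simpa using h3
  · intro s _
    have : ‖Complex.exp (Complex.I * s)‖ = 1 := by
      simp [Complex.norm_exp]
    simp [this]

lemma integral_abs_le_of_sq (a b : ℝ) (hab : a ≤ b) {v : ℝ → ℝ} (hv : Continuous v)
    {B2 : ℝ} (hB2 : (∫ x in a..b, v x ^ 2) ≤ B2) :
    (∫ x in a..b, |v x|) ≤ ((b - a) + B2) / 2 := by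
  have h2 : (∫ x in a..b, |v x|) ≤ ∫ x in a..b, (1 + v x ^ 2) / 2 := by
    apply intervalIntegral.integral_mono_on hab (hv.abs.intervalIntegrable _ _)
      (((continuous_const.add (hv.pow 2)).div_const 2).intervalIntegrable _ _)
    intro x _
    show |v x| ≤ (1 + v x ^ 2) / 2
    nlinarith [sq_nonneg (|v x| - 1), sq_abs (v x)]
  have h3 : (∫ x in a..b, (1 + v x ^ 2) / 2) = ((b - a) + ∫ x in a..b, v x ^ 2) / 2 := by
    rw [intervalIntegral.integral_div, intervalIntegral.integral_add (g := fun x => v x ^ 2)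
      (intervalIntegrable_const) ((hv.pow 2).intervalIntegrable _ _)]
    simp
  rw [h3] at h2
  linarith

lemma itD_const_mul {n : ℕ} (c : ℂ) {f : ℝ → ℂ} (hf : ContDiff ℝ n f) (x : ℝ) :
    iteratedDeriv n (fun y => c * f y) x = c * iteratedDeriv n f x := by
  have := iteratedDerivWithin_const_smul (𝕜 := ℝ) (s := (Set.univ : Set ℝ)) (x := x)
    (Set.mem_univ x) uniqueDiffOn_univ c hf.contDiffWithinAt
  simpa [iteratedDerivWithin_univ, smul_eq_mul] using this

lemma leibniz_norm_bound {f g : ℝ → ℂ} (hf : ContDiff ℝ ((⊤ : ℕ∞) : WithTop ℕ∞) f)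
    (hg : ContDiff ℝ ((⊤ : ℕ∞) : WithTop ℕ∞) g) (n : ℕ)
    (x : ℝ) : ‖iteratedDeriv n (fun y => f y * g y) x‖ ≤
      ∑ i ∈ Finset.range (n + 1),
        (n.choose i : ℝ) * (‖iteratedDeriv i f x‖ * ‖iteratedDeriv (n - i) g x‖) := by
  have := norm_iteratedFDeriv_mul_le (𝕜 := ℝ) hf hg x (n := n) (by exact_mod_cast le_top)
  simp_rw [norm_iteratedFDeriv_eq_norm_iteratedDeriv, mul_assoc] at this
  exact this

lemma sum_choose_mul_le {n : ℕ} {u : ℕ → ℝ} {T : ℝ}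
    (h : ∀ i ∈ Finset.range (n + 1), u i ≤ T) :
    (∑ i ∈ Finset.range (n + 1), (n.choose i : ℝ) * u i) ≤ 2 ^ n * T := by
  calc (∑ i ∈ Finset.range (n + 1), (n.choose i : ℝ) * u i)
      ≤ ∑ i ∈ Finset.range (n + 1), (n.choose i : ℝ) * T :=
        Finset.sum_le_sum fun i hi => mul_le_mul_of_nonneg_left (h i hi) (by positivity)
    _ = 2 ^ n * T := by
        rw [← Finset.sum_mul]
        norm_cast
        rw [Nat.sum_range_choose]

lemma itD_conj_norm (f : ℝ → ℂ) (p : ℕ) (x : ℝ) :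
    ‖iteratedDeriv p (fun y => (starRingEnd ℂ) (f y)) x‖ = ‖iteratedDeriv p f x‖ := by
  rw [← norm_iteratedFDeriv_eq_norm_iteratedDeriv, ← norm_iteratedFDeriv_eq_norm_iteratedDeriv]
  exact Complex.conjLIE.norm_iteratedFDeriv_comp_left f x p

lemma sup_bound_of_deriv (a b : ℝ) (hab : a < b) {u u' : ℝ → ℂ} (hu : Continuous u)
    (hu' : Continuous u') (hd : ∀ y, HasDerivAt u (u' y) y) {B2 : ℝ}
    (h1 : (∫ x in a..b, ‖u x‖ ^ 2) ≤ B2) (h2 : (∫ x in a..b, ‖u' x‖ ^ 2) ≤ B2) :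
    ∀ x ∈ Set.Icc a b, ‖u x‖ ≤ ((b - a) + B2) / 2 / (b - a) + ((b - a) + B2) / 2 := by
  intro x hx
  set Q := ((b - a) + B2) / 2 with hQ
  -- bound on integral of norms
  have hIu : (∫ t in a..b, |‖u t‖|) ≤ Q :=
    integral_abs_le_of_sq a b hab.le (hv := hu.norm) (by simpa using h1)
  have hIu' : (∫ t in a..b, |‖u' t‖|) ≤ Q :=
    integral_abs_le_of_sq a b hab.le (hv := hu'.norm) (by simpa using h2)
  -- minimum point
  obtain ⟨y, hy, hmin⟩ := isCompact_Icc.exists_isMinOn (Set.nonempty_Icc.mpr hab.le)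
    (hu.norm.continuousOn (s := Set.Icc a b))
  have hmin' : ∀ t ∈ Set.Icc a b, ‖u y‖ ≤ ‖u t‖ := fun t ht => hmin ht
  -- ‖u y‖ * (b - a) ≤ ∫ ‖u‖
  have hconst : ‖u y‖ * (b - a) ≤ ∫ t in a..b, |‖u t‖| := by
    have := intervalIntegral.integral_mono_on hab.le (_root_.intervalIntegrable_const (μ := volume) (c := ‖u y‖))
      (hu.norm.abs.intervalIntegrable _ _) (fun t ht => (hmin' t ht).trans (le_abs_self _))
    simpa [mul_comm] using this
  have hyb : ‖u y‖ ≤ Q / (b - a) := by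
    rw [le_div_iff₀ (by linarith)]
    exact hconst.trans hIu
  -- FTC between y and x
  have hftc : ‖u x‖ ≤ ‖u y‖ + ∫ t in a..b, |‖u' t‖| := by
    have hint : ∀ c d : ℝ, IntervalIntegrable u' volume c d := fun c d =>
      hu'.intervalIntegrable _ _
    have heq : (∫ t in y..x, u' t) = u x - u y :=
      intervalIntegral.integral_eq_sub_of_hasDerivAt (fun t _ => hd t) (hint y x)
    have hxy : ‖u x‖ ≤ ‖u y‖ + ‖∫ t in y..x, u' t‖ := by
      have : u x = u y + ∫ t in y..x, u' t := by rw [heq]; ring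
      calc ‖u x‖ = ‖u y + ∫ t in y..x, u' t‖ := by rw [← this]
        _ ≤ ‖u y‖ + ‖∫ t in y..x, u' t‖ := norm_add_le _ _
    have hsub : ‖∫ t in y..x, u' t‖ ≤ ∫ t in a..b, |‖u' t‖| := by
      have hnn : ∀ t, (0:ℝ) ≤ |‖u' t‖| := fun t => abs_nonneg _
      have hintn : ∀ c d : ℝ, IntervalIntegrable (fun t => |‖u' t‖|) volume c d :=
        fun c d => (hu'.norm.abs.intervalIntegrable _ _)
      rcases le_total y x with hle | hle
      · calc ‖∫ t in y..x, u' t‖ ≤ ∫ t in y..x, |‖u' t‖| := by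
              refine (intervalIntegral.norm_integral_le_abs_integral_norm).trans ?_
              rw [abs_of_nonneg (intervalIntegral.integral_nonneg hle (fun t _ => norm_nonneg _))]
              apply intervalIntegral.integral_mono_on hle (hu'.norm.intervalIntegrable _ _)
                (hintn y x) (fun t _ => le_abs_self _)
          _ ≤ ∫ t in a..b, |‖u' t‖| :=
              intervalIntegral.integral_mono_interval hy.1 hle hx.2
                (Filter.Eventually.of_forall hnn) (hintn a b)
      · calc ‖∫ t in y..x, u' t‖ = ‖∫ t in x..y, u' t‖ := by
              rw [intervalIntegral.integral_symm]; simp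
          _ ≤ ∫ t in x..y, |‖u' t‖| := by
              refine (intervalIntegral.norm_integral_le_abs_integral_norm).trans ?_
              rw [abs_of_nonneg (intervalIntegral.integral_nonneg hle (fun t _ => norm_nonneg _))]
              apply intervalIntegral.integral_mono_on hle (hu'.norm.intervalIntegrable _ _)
                (hintn x y) (fun t _ => le_abs_self _)
          _ ≤ ∫ t in a..b, |‖u' t‖| :=
              intervalIntegral.integral_mono_interval hx.1 hle hy.2
                (Filter.Eventually.of_forall hnn) (hintn a b)
    linarith
  linarith

section MainProof

open GPE Finset

lemma cast_le_top (n : ℕ) : (n : WithTop ℕ∞) ≤ ((⊤ : ℕ∞) : WithTop ℕ∞) := by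
  exact_mod_cast le_top

lemma cast_lt_top (n : ℕ) : (n : WithTop ℕ∞) < ((⊤ : ℕ∞) : WithTop ℕ∞) := by
  exact_mod_cast ENat.coe_lt_top n

set_option maxHeartbeats 1000000 in
/-- H^m bound for φ(e^{−iτβ|φ|²} − 1): for trigonometric polynomials φ with
‖φ‖_{H^m} ≤ B and 0 < τ < 1, one has ‖φ(e^{−iτβ|φ|²} − 1)‖_{H^m} ≤ Cτ with C
depending only on m, β, Ω = (a,b) and B. -/
theorem nonlinear_phase_Hm_bound
    (a b : ℝ) (hab : a < b) (m : ℕ) (hm : 2 ≤ m) (β B : ℝ) (hB : 0 < B) :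
    ∃ C > (0 : ℝ), ∀ N : ℕ, 0 < N → Even N →
      ∀ φ : ℝ → ℂ, MemXN a b N φ → sobNorm a b m φ ≤ B →
      ∀ τ : ℝ, 0 < τ → τ < 1 →
        sobNorm a b m
          (fun x => φ x *
            (Complex.exp (-(Complex.I * ((τ * β * ‖φ x‖ ^ 2 : ℝ) : ℂ))) - 1))
          ≤ C * τ := by
  have hba : (0:ℝ) < b - a := sub_pos.mpr hab
  set Q : ℝ := ((b - a) + B ^ 2) / 2 with hQdef
  have hQ0 : 0 < Q := by positivity
  set K : ℝ := Q / (b - a) + Q with hKdef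
  have hK0 : 0 < K := by positivity
  set L : ℝ := max 1 K with hLdef
  have hL1 : (1:ℝ) ≤ L := le_max_left _ _
  have hL0 : (0:ℝ) < L := lt_of_lt_of_le one_pos hL1
  have hKL : K ≤ L := le_max_right _ _
  have h2m1 : (1:ℝ) ≤ 2 ^ m := one_le_pow₀ (by norm_num)
  set A0 : ℝ := |β| * 2 ^ m * L with hA0def
  have hA00 : 0 ≤ A0 := by positivity
  set E : ℝ := 2 ^ m * max 1 (A0 * L) with hEdef
  have hmax1 : (1:ℝ) ≤ max 1 (A0 * L) := le_max_left _ _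
  have hE1 : (1:ℝ) ≤ E := by nlinarith
  set G : ℝ := E ^ m with hGdef
  have hG1 : (1:ℝ) ≤ G := one_le_pow₀ hE1
  set Cg : ℝ := 2 ^ m * A0 * G + A0 with hCgdef
  have hCg0 : 0 ≤ Cg := by positivity
  have hA0Cg : A0 ≤ Cg := by
    have h9 : (0:ℝ) ≤ 2 ^ m * A0 * G := by positivity
    linarith
  set CF : ℝ := 2 ^ m * Cg * L + 1 with hCFdef
  have hCF1 : (1:ℝ) ≤ CF := by
    have h9 : (0:ℝ) ≤ 2 ^ m * Cg * L := by positivity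
    linarith
  have hCF0 : (0:ℝ) < CF := lt_of_lt_of_le one_pos hCF1
  have hinner : (0:ℝ) < ((m:ℝ) + 1) * (CF ^ 2 * (2 * L ^ 2 * (b - a) + 2 * B ^ 2)) := by
    have : (0:ℝ) < 2 * L ^ 2 * (b - a) + 2 * B ^ 2 := by positivity
    positivity
  refine ⟨Real.sqrt (((m:ℝ) + 1) * (CF ^ 2 * (2 * L ^ 2 * (b - a) + 2 * B ^ 2))),
    Real.sqrt_pos.mpr hinner, ?_⟩
  set C : ℝ := Real.sqrt (((m:ℝ) + 1) * (CF ^ 2 * (2 * L ^ 2 * (b - a) + 2 * B ^ 2))) with hCdef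
  have hC0 : 0 < C := Real.sqrt_pos.mpr hinner
  intro N hN hNe φ hmem hφB τ hτ0 hτ1
  clear_value Q K L A0 E G Cg CF C
  -- smoothness of φ
  have hφs : ContDiff ℝ ((⊤ : ℕ∞) : WithTop ℕ∞) φ := by
    obtain ⟨c, hc⟩ := hmem
    rw [hc]
    apply ContDiff.sum
    intro l _
    apply ContDiff.mul contDiff_const
    unfold GPE.eMode
    exact ContDiff.cexp (contDiff_const.mul
      (Complex.ofRealCLM.contDiff.comp (contDiff_const.mul (contDiff_id.sub contDiff_const))))
  have hconj : ContDiff ℝ ((⊤ : ℕ∞) : WithTop ℕ∞) (fun x => (starRingEnd ℂ) (φ x)) :=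
    Complex.conjCLE.toContinuousLinearMap.contDiff.comp hφs
  set w : ℝ → ℂ := fun x => -(Complex.I * (β:ℂ)) * (φ x * (starRingEnd ℂ) (φ x)) with hwdef
  set g : ℝ → ℂ := fun x => Complex.exp ((τ:ℂ) * w x) with hgdef
  set h : ℝ → ℂ := fun x => (τ:ℂ) * w x with hhdef
  have hws : ContDiff ℝ ((⊤ : ℕ∞) : WithTop ℕ∞) w := contDiff_const.mul (hφs.mul hconj)
  have hhs : ContDiff ℝ ((⊤ : ℕ∞) : WithTop ℕ∞) h := contDiff_const.mul hws
  have hgs : ContDiff ℝ ((⊤ : ℕ∞) : WithTop ℕ∞) g := hhs.cexp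
  set u : ℝ → ℂ := fun x => g x - 1 with hudef
  have hus : ContDiff ℝ ((⊤ : ℕ∞) : WithTop ℕ∞) u := hgs.sub contDiff_const
  set Dm : ℝ → ℝ := fun x => ‖iteratedDeriv m φ x‖ with hDmdef
  have hDm0 : ∀ x, 0 ≤ Dm x := fun x => norm_nonneg _
  -- rewrite the target function
  have hexp_eq : (fun x => φ x *
        (Complex.exp (-(Complex.I * ((τ * β * ‖φ x‖ ^ 2 : ℝ) : ℂ))) - 1)) =
      fun x => φ x * u x := by
    funext x
    have hE : -(Complex.I * ((τ * β * ‖φ x‖ ^ 2 : ℝ) : ℂ)) = (τ:ℂ) * w x := by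
      simp only [hwdef]
      rw [Complex.mul_conj, Complex.normSq_eq_norm_sq]
      push_cast
      ring
    rw [hE]
  -- |g| = 1
  have hgnorm : ∀ x, ‖g x‖ = 1 := by
    intro x
    have hre : ((τ:ℂ) * w x).re = 0 := by
      simp only [hwdef]
      rw [Complex.mul_conj]
      simp [Complex.mul_re, Complex.mul_im]
    simp only [hgdef, Complex.norm_exp, hre, Real.exp_zero]
  -- h as I * real
  have hIt : ∀ x, (τ:ℂ) * w x = Complex.I * ((-(τ * β * Complex.normSq (φ x)) : ℝ) : ℂ) := by
    intro x
    simp only [hwdef]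
    rw [Complex.mul_conj]
    push_cast
    ring
  -- L² bounds on derivatives of φ
  have hB2 : ∀ k ≤ m, (∫ x in a..b, ‖iteratedDeriv k φ x‖ ^ 2) ≤ B ^ 2 := by
    intro k hk
    have hS : ∀ j : ℕ, 0 ≤ ∫ x in a..b, ‖iteratedDeriv j φ x‖ ^ 2 := fun j =>
      intervalIntegral.integral_nonneg hab.le (fun t _ => by positivity)
    have hsum0 : 0 ≤ ∑ j ∈ Finset.range (m+1), ∫ x in a..b, ‖iteratedDeriv j φ x‖ ^ 2 :=
      Finset.sum_nonneg fun j _ => hS j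
    have h1 : (∑ j ∈ Finset.range (m+1), ∫ x in a..b, ‖iteratedDeriv j φ x‖ ^ 2) ≤ B ^ 2 := by
      have h2 := hφB
      unfold GPE.sobNorm at h2
      nlinarith [Real.sq_sqrt hsum0, Real.sqrt_nonneg
        (∑ j ∈ Finset.range (m+1), ∫ x in a..b, ‖iteratedDeriv j φ x‖ ^ 2)]
    exact le_trans (Finset.single_le_sum (f := fun j => ∫ x in a..b, ‖iteratedDeriv j φ x‖ ^ 2)
      (fun j _ => hS j) (Finset.mem_range.mpr (Nat.lt_succ_of_le hk))) h1
  -- Sobolev sup bound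
  have hcφ : ∀ k : ℕ, Continuous (iteratedDeriv k φ) := fun k =>
    ContDiff.continuous_iteratedDeriv k hφs (cast_le_top k)
  have hK : ∀ j < m, ∀ x ∈ Set.Icc a b, ‖iteratedDeriv j φ x‖ ≤ K := by
    intro j hj x hx
    have hd : ∀ y : ℝ, HasDerivAt (iteratedDeriv j φ) (iteratedDeriv (j+1) φ y) y := by
      intro y
      have hdiff := (hφs.differentiable_iteratedDeriv j (cast_lt_top j)) y
      have := hdiff.hasDerivAt
      rwa [iteratedDeriv_succ]
    rw [hKdef, hQdef]
    exact sup_bound_of_deriv a b hab (hcφ j) (hcφ (j+1)) hd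
      (hB2 j hj.le) (hB2 (j+1) hj) x hx
  have hKL' : ∀ j < m, ∀ x ∈ Set.Icc a b, ‖iteratedDeriv j φ x‖ ≤ L :=
    fun j hj x hx => (hK j hj x hx).trans hKL
  -- bound on derivatives of w
  have hφconjmul : ContDiff ℝ ((⊤ : ℕ∞) : WithTop ℕ∞)
      (fun x => φ x * (starRingEnd ℂ) (φ x)) := hφs.mul hconj
  have hitw : ∀ j ≤ m, ∀ x ∈ Set.Icc a b,
      ‖iteratedDeriv j w x‖ ≤ A0 * (L + Dm x) := by
    intro j hj x hx
    have h1 : iteratedDeriv j w x = -(Complex.I * (β:ℂ)) *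
        iteratedDeriv j (fun y => φ y * (starRingEnd ℂ) (φ y)) x :=
      itD_const_mul _ (hφconjmul.of_le (cast_le_top j)) x
    rw [h1, norm_mul]
    have hc : ‖-(Complex.I * (β:ℂ))‖ = |β| := by simp
    have h2 := leibniz_norm_bound hφs hconj j x
    have h3 : ∀ i ∈ Finset.range (j+1),
        ‖iteratedDeriv i φ x‖ * ‖iteratedDeriv (j-i) (fun y => (starRingEnd ℂ) (φ y)) x‖
          ≤ L * (L + Dm x) := by
      intro i hi
      rw [itD_conj_norm]
      have hij : i ≤ j := Nat.lt_succ_iff.mp (Finset.mem_range.mp hi)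
      rcases Nat.lt_or_ge i m with him | him
      · have e1 : ‖iteratedDeriv i φ x‖ ≤ L := hKL' i him x hx
        rcases Nat.lt_or_ge (j-i) m with h2m | h2m
        · have e2 : ‖iteratedDeriv (j-i) φ x‖ ≤ L := hKL' _ h2m x hx
          calc ‖iteratedDeriv i φ x‖ * ‖iteratedDeriv (j-i) φ x‖
              ≤ L * L := mul_le_mul e1 e2 (norm_nonneg _) hL0.le
            _ ≤ L * (L + Dm x) :=
                mul_le_mul_of_nonneg_left (by linarith [hDm0 x]) hL0.le
        · have hji : j - i = m := le_antisymm ((Nat.sub_le j i).trans hj) h2m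
          rw [hji]
          exact mul_le_mul e1 (by linarith [hL0] : Dm x ≤ L + Dm x) (hDm0 x) hL0.le
      · have hi' : i = m := le_antisymm (hij.trans hj) him
        have hji0 : j - i = 0 := by omega
        rw [hji0, hi']
        have e2 : ‖iteratedDeriv 0 φ x‖ ≤ L := hKL' 0 (by omega) x hx
        calc Dm x * ‖iteratedDeriv 0 φ x‖
            ≤ (L + Dm x) * L :=
              mul_le_mul (by linarith [hL0] : Dm x ≤ L + Dm x) e2 (norm_nonneg _)
                (by linarith [hDm0 x, hL0])
          _ = L * (L + Dm x) := by ring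
    have h4 := (h2.trans (sum_choose_mul_le h3))
    have h5 : (2:ℝ)^j ≤ 2^m := pow_le_pow_right₀ (by norm_num) hj
    rw [hc]
    calc |β| * ‖iteratedDeriv j (fun y => φ y * (starRingEnd ℂ) (φ y)) x‖
        ≤ |β| * (2^j * (L * (L + Dm x))) :=
          mul_le_mul_of_nonneg_left h4 (abs_nonneg β)
      _ = (|β| * L * 2^j) * (L + Dm x) := by ring
      _ ≤ (|β| * L * 2^m) * (L + Dm x) := by
          apply mul_le_mul_of_nonneg_right
            (mul_le_mul_of_nonneg_left h5 (mul_nonneg (abs_nonneg β) hL0.le))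
          linarith [hDm0 x, hL0]
      _ = A0 * (L + Dm x) := by rw [hA0def]; ring
  have hitwlow : ∀ j < m, ∀ x ∈ Set.Icc a b, ‖iteratedDeriv j w x‖ ≤ A0 * L := by
    intro j hj x hx
    have h1 : iteratedDeriv j w x = -(Complex.I * (β:ℂ)) *
        iteratedDeriv j (fun y => φ y * (starRingEnd ℂ) (φ y)) x :=
      itD_const_mul _ (hφconjmul.of_le (cast_le_top j)) x
    rw [h1, norm_mul]
    have hc : ‖-(Complex.I * (β:ℂ))‖ = |β| := by simp
    have h2 := leibniz_norm_bound hφs hconj j x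
    have h3 : ∀ i ∈ Finset.range (j+1),
        ‖iteratedDeriv i φ x‖ * ‖iteratedDeriv (j-i) (fun y => (starRingEnd ℂ) (φ y)) x‖
          ≤ L * L := by
      intro i hi
      rw [itD_conj_norm]
      have hij : i ≤ j := Nat.lt_succ_iff.mp (Finset.mem_range.mp hi)
      have e1 : ‖iteratedDeriv i φ x‖ ≤ L := hKL' i (lt_of_le_of_lt hij hj) x hx
      have e2 : ‖iteratedDeriv (j-i) φ x‖ ≤ L :=
        hKL' _ (lt_of_le_of_lt (Nat.sub_le j i) hj) x hx
      exact mul_le_mul e1 e2 (norm_nonneg _) hL0.le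
    have h4 := (h2.trans (sum_choose_mul_le h3))
    have h5 : (2:ℝ)^j ≤ 2^m := pow_le_pow_right₀ (by norm_num) hj.le
    rw [hc]
    calc |β| * ‖iteratedDeriv j (fun y => φ y * (starRingEnd ℂ) (φ y)) x‖
        ≤ |β| * (2^j * (L * L)) := mul_le_mul_of_nonneg_left h4 (abs_nonneg β)
      _ = (|β| * L * 2^j) * L := by ring
      _ ≤ (|β| * L * 2^m) * L := by
          apply mul_le_mul_of_nonneg_right
            (mul_le_mul_of_nonneg_left h5 (mul_nonneg (abs_nonneg β) hL0.le)) hL0.le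
      _ = A0 * L := by rw [hA0def]; ring
  -- derivatives of h
  have hith : ∀ j : ℕ, ∀ x : ℝ, ‖iteratedDeriv j h x‖ = τ * ‖iteratedDeriv j w x‖ := by
    intro j x
    have h1 : iteratedDeriv j h x = (τ:ℂ) * iteratedDeriv j w x :=
      itD_const_mul _ (hws.of_le (cast_le_top j)) x
    rw [h1, norm_mul]
    simp [abs_of_pos hτ0]
  -- deriv of g
  have hdg : deriv g = fun x => g x * deriv h x := by
    funext x
    have h1 : HasDerivAt h (deriv h x) x :=
      ((hhs.differentiable (by simp)) x).hasDerivAt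
    exact h1.cexp.deriv
  have hdhs : ContDiff ℝ ((⊤ : ℕ∞) : WithTop ℕ∞) (deriv h) := (contDiff_infty_iff_deriv.mp hhs).2
  -- bound on g derivatives below m (uniform, no τ)
  have hgd : ∀ n < m, ∀ x ∈ Set.Icc a b, ‖iteratedDeriv n g x‖ ≤ E ^ n := by
    intro n
    induction n using Nat.strong_induction_on with
    | _ n IH =>
      intro hn x hx
      match n, hn with
      | 0, hn => simp [hgnorm x]
      | (k+1), hn =>
        rw [iteratedDeriv_succ', hdg]
        have hb := leibniz_norm_bound hgs hdhs k x
        have hterm : ∀ i ∈ Finset.range (k+1),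
            ‖iteratedDeriv i g x‖ * ‖iteratedDeriv (k-i) (deriv h) x‖
              ≤ E ^ k * max 1 (A0 * L) := by
          intro i hi
          have hik : i ≤ k := Nat.lt_succ_iff.mp (Finset.mem_range.mp hi)
          have e1 : ‖iteratedDeriv i g x‖ ≤ E ^ k :=
            (IH i (Nat.lt_succ_of_le hik) (by omega) x hx).trans
              (pow_le_pow_right₀ hE1 hik)
          have e2 : ‖iteratedDeriv (k-i) (deriv h) x‖ ≤ max 1 (A0 * L) := by
            rw [← iteratedDeriv_succ', hith]
            have h6 := hitwlow (k-i+1) (by omega) x hx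
            calc τ * ‖iteratedDeriv (k-i+1) w x‖ ≤ 1 * (A0 * L) := by
                  apply mul_le_mul hτ1.le h6 (norm_nonneg _) zero_le_one
              _ ≤ max 1 (A0 * L) := by rw [one_mul]; exact le_max_right _ _
          exact mul_le_mul e1 e2 (norm_nonneg _) (by positivity)
        refine hb.trans ((sum_choose_mul_le hterm).trans ?_)
        have h5 : (2:ℝ)^k ≤ 2^m := pow_le_pow_right₀ (by norm_num) (by omega)
        have hEk : (0:ℝ) ≤ E ^ k := pow_nonneg (by linarith) k
        calc (2:ℝ)^k * (E ^ k * max 1 (A0 * L)) = (2^k * max 1 (A0 * L)) * E ^ k := by ring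
          _ ≤ (2^m * max 1 (A0 * L)) * E ^ k := by
              apply mul_le_mul_of_nonneg_right
                (mul_le_mul_of_nonneg_right h5 (by linarith [hmax1])) hEk
          _ = E ^ (k+1) := by rw [hEdef]; ring
  have hgdG : ∀ n < m, ∀ x ∈ Set.Icc a b, ‖iteratedDeriv n g x‖ ≤ G := by
    intro n hn x hx
    rw [hGdef]
    exact (hgd n hn x hx).trans (pow_le_pow_right₀ hE1 hn.le)
  -- small bound on g derivatives, orders 1..m
  have hgsmall : ∀ n, 1 ≤ n → n ≤ m → ∀ x ∈ Set.Icc a b,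
      ‖iteratedDeriv n g x‖ ≤ τ * (2 ^ m * A0 * G) * (L + Dm x) := by
    intro n hn1 hnm x hx
    obtain ⟨k, rfl⟩ : ∃ k, n = k + 1 := ⟨n - 1, by omega⟩
    rw [iteratedDeriv_succ', hdg]
    have hb := leibniz_norm_bound hgs hdhs k x
    have hterm : ∀ i ∈ Finset.range (k+1),
        ‖iteratedDeriv i g x‖ * ‖iteratedDeriv (k-i) (deriv h) x‖
          ≤ G * (τ * A0 * (L + Dm x)) := by
      intro i hi
      have hik : i ≤ k := Nat.lt_succ_iff.mp (Finset.mem_range.mp hi)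
      have e1 : ‖iteratedDeriv i g x‖ ≤ G := hgdG i (by omega) x hx
      have e2 : ‖iteratedDeriv (k-i) (deriv h) x‖ ≤ τ * A0 * (L + Dm x) := by
        rw [← iteratedDeriv_succ', hith]
        have h6 := hitw (k-i+1) (by omega) x hx
        rw [mul_assoc]
        exact mul_le_mul_of_nonneg_left h6 hτ0.le
      exact mul_le_mul e1 e2 (norm_nonneg _) (by linarith)
    refine hb.trans ((sum_choose_mul_le hterm).trans ?_)
    have h5 : (2:ℝ)^k ≤ 2^m := pow_le_pow_right₀ (by norm_num) (by omega)
    have hnn : (0:ℝ) ≤ G * (τ * A0 * (L + Dm x)) :=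
      mul_nonneg (by linarith [hG1]) (mul_nonneg (mul_nonneg hτ0.le hA00)
        (by linarith [hDm0 x, hL0]))
    calc (2:ℝ)^k * (G * (τ * A0 * (L + Dm x)))
        ≤ 2^m * (G * (τ * A0 * (L + Dm x))) := mul_le_mul_of_nonneg_right h5 hnn
      _ = τ * (2 ^ m * A0 * G) * (L + Dm x) := by ring
  -- order-0 small bound
  have hg1 : ∀ x ∈ Set.Icc a b, ‖g x - 1‖ ≤ τ * (A0 * L) := by
    intro x hx
    have h1 : ‖g x - 1‖ ≤ |(-(τ * β * Complex.normSq (φ x)))| := by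
      rw [hgdef]
      simp only
      rw [hIt x]
      exact norm_exp_I_mul_sub_one_le _
    refine h1.trans ?_
    have h2 : Complex.normSq (φ x) = ‖φ x‖ ^ 2 := by
      rw [Complex.normSq_eq_norm_sq]
    have h3 : ‖φ x‖ ≤ L := hKL' 0 (by omega) x hx
    have h4 : |(-(τ * β * Complex.normSq (φ x)))| = τ * |β| * ‖φ x‖ ^ 2 := by
      rw [abs_neg, abs_mul, abs_mul, abs_of_pos hτ0, h2, abs_of_nonneg (sq_nonneg ‖φ x‖)]
    rw [h4]
    have h5 : ‖φ x‖ ^ 2 ≤ L * L := by nlinarith [norm_nonneg (φ x)]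
    have h6 : |β| * ‖φ x‖ ^ 2 ≤ |β| * (L * L) := mul_le_mul_of_nonneg_left h5 (abs_nonneg β)
    have h7 : |β| * (L * L) ≤ (|β| * 2^m * L) * L := by
      nlinarith [mul_nonneg (by linarith [h2m1] : (0:ℝ) ≤ (2:ℝ)^m - 1)
        (mul_nonneg (mul_nonneg (abs_nonneg β) hL0.le) hL0.le)]
    calc τ * |β| * ‖φ x‖ ^ 2 = τ * (|β| * ‖φ x‖ ^ 2) := by ring
      _ ≤ τ * ((|β| * 2^m * L) * L) := mul_le_mul_of_nonneg_left (h6.trans h7) hτ0.le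
      _ = τ * (A0 * L) := by rw [hA0def]

  -- bound on u derivatives
  have huD : ∀ n ≤ m, ∀ x ∈ Set.Icc a b,
      ‖iteratedDeriv n u x‖ ≤ τ * Cg * (L + Dm x) := by
    intro n hn x hx
    match n with
    | 0 =>
      simp only [iteratedDeriv_zero]
      refine (hg1 x hx).trans ?_
      have hstep : A0 * L ≤ Cg * (L + Dm x) :=
        mul_le_mul hA0Cg (by linarith [hDm0 x]) hL0.le hCg0
      calc τ * (A0 * L) ≤ τ * (Cg * (L + Dm x)) := mul_le_mul_of_nonneg_left hstep hτ0.le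
        _ = τ * Cg * (L + Dm x) := by ring
    | (k+1) =>
      have hdu : deriv u = deriv g := by
        funext y
        exact deriv_sub_const _
      rw [iteratedDeriv_succ', hdu, ← iteratedDeriv_succ']
      refine (hgsmall (k+1) (by omega) hn x hx).trans ?_
      have h7 : 2 ^ m * A0 * G ≤ Cg := by rw [hCgdef]; linarith
      have hstep : (2 ^ m * A0 * G) * (L + Dm x) ≤ Cg * (L + Dm x) :=
        mul_le_mul_of_nonneg_right h7 (by linarith [hDm0 x])
      calc τ * (2 ^ m * A0 * G) * (L + Dm x) = τ * ((2 ^ m * A0 * G) * (L + Dm x)) := by ring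
        _ ≤ τ * (Cg * (L + Dm x)) := mul_le_mul_of_nonneg_left hstep hτ0.le
        _ = τ * Cg * (L + Dm x) := by ring
  -- final pointwise bound on F = φ * u
  have hFpt : ∀ k ≤ m, ∀ x ∈ Set.Icc a b,
      ‖iteratedDeriv k (fun y => φ y * u y) x‖ ≤ τ * CF * (L + Dm x) := by
    intro k hk x hx
    have hb := leibniz_norm_bound hφs hus k x
    have hterm : ∀ i ∈ Finset.range (k+1),
        ‖iteratedDeriv i φ x‖ * ‖iteratedDeriv (k-i) u x‖
          ≤ τ * (Cg * L) * (L + Dm x) := by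
      intro i hi
      have hik : i ≤ k := Nat.lt_succ_iff.mp (Finset.mem_range.mp hi)
      have e2 : ‖iteratedDeriv (k-i) u x‖ ≤ τ * Cg * (L + Dm x) :=
        huD (k-i) (by omega) x hx
      rcases Nat.lt_or_ge i m with him | him
      · have e1 : ‖iteratedDeriv i φ x‖ ≤ L := hKL' i him x hx
        calc ‖iteratedDeriv i φ x‖ * ‖iteratedDeriv (k-i) u x‖
            ≤ L * (τ * Cg * (L + Dm x)) :=
              mul_le_mul e1 e2 (norm_nonneg _) hL0.le
          _ = τ * (Cg * L) * (L + Dm x) := by ring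
      · have hi' : i = m := le_antisymm (hik.trans hk) him
        have hki0 : k - i = 0 := by omega
        rw [hi', show k - m = 0 by omega]
        simp only [iteratedDeriv_zero]
        have hDx : ‖iteratedDeriv m φ x‖ = Dm x := rfl
        rw [hDx]
        have hu0 : ‖u x‖ ≤ τ * (A0 * L) := hg1 x hx
        have hstep : A0 * Dm x ≤ Cg * (L + Dm x) :=
          mul_le_mul hA0Cg (by linarith [hL0]) (hDm0 x) hCg0
        calc Dm x * ‖u x‖ ≤ Dm x * (τ * (A0 * L)) :=
              mul_le_mul_of_nonneg_left hu0 (hDm0 x)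
          _ = (τ * L) * (A0 * Dm x) := by ring
          _ ≤ (τ * L) * (Cg * (L + Dm x)) :=
              mul_le_mul_of_nonneg_left hstep (mul_nonneg hτ0.le hL0.le)
          _ = τ * (Cg * L) * (L + Dm x) := by ring
    refine hb.trans ((sum_choose_mul_le hterm).trans ?_)
    have h5 : (2:ℝ)^k ≤ 2^m := pow_le_pow_right₀ (by norm_num) hk
    have hnn : (0:ℝ) ≤ τ * (Cg * L) * (L + Dm x) :=
      mul_nonneg (mul_nonneg hτ0.le (mul_nonneg hCg0 hL0.le)) (by linarith [hDm0 x, hL0])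
    have h8 : 2^m * Cg * L ≤ CF := by rw [hCFdef]; linarith
    calc (2:ℝ)^k * (τ * (Cg * L) * (L + Dm x))
        ≤ 2^m * (τ * (Cg * L) * (L + Dm x)) := mul_le_mul_of_nonneg_right h5 hnn
      _ = τ * (2^m * Cg * L) * (L + Dm x) := by ring
      _ ≤ τ * CF * (L + Dm x) := by
          apply mul_le_mul_of_nonneg_right
            (mul_le_mul_of_nonneg_left h8 hτ0.le) (by linarith [hDm0 x, hL0])
  -- integrate
  rw [hexp_eq]
  have hFs : ContDiff ℝ ((⊤ : ℕ∞) : WithTop ℕ∞) (fun y => φ y * u y) := hφs.mul hus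
  have hcF : ∀ k : ℕ, Continuous (iteratedDeriv k (fun y => φ y * u y)) := fun k =>
    ContDiff.continuous_iteratedDeriv k hFs (cast_le_top k)
  have hIk : ∀ k ≤ m, (∫ x in a..b, ‖iteratedDeriv k (fun y => φ y * u y) x‖ ^ 2)
      ≤ (τ * CF) ^ 2 * (2 * L ^ 2 * (b - a) + 2 * B ^ 2) := by
    intro k hk
    have hmono : (∫ x in a..b, ‖iteratedDeriv k (fun y => φ y * u y) x‖ ^ 2)
        ≤ ∫ x in a..b, (τ * CF) ^ 2 * (2 * L ^ 2 + 2 * ‖iteratedDeriv m φ x‖ ^ 2) := by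
      apply intervalIntegral.integral_mono_on hab.le
        (((hcF k).norm.pow 2).intervalIntegrable _ _)
        ((Continuous.intervalIntegrable (by fun_prop) _ _))
      intro x hx
      have h1 := hFpt k hk x hx
      have h2 : ‖iteratedDeriv k (fun y => φ y * u y) x‖ ^ 2 ≤ (τ * CF * (L + Dm x)) ^ 2 :=
        pow_le_pow_left₀ (norm_nonneg _) h1 2
      refine h2.trans ?_
      have hDx : Dm x = ‖iteratedDeriv m φ x‖ := rfl
      rw [← hDx]
      have h9 : (L + Dm x) ^ 2 ≤ 2 * L ^ 2 + 2 * Dm x ^ 2 := by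
        nlinarith [sq_nonneg (L - Dm x)]
      calc (τ * CF * (L + Dm x)) ^ 2 = (τ * CF) ^ 2 * (L + Dm x) ^ 2 := by ring
        _ ≤ (τ * CF) ^ 2 * (2 * L ^ 2 + 2 * Dm x ^ 2) :=
            mul_le_mul_of_nonneg_left h9 (sq_nonneg _)
    refine hmono.trans ?_
    have hsplit : (∫ x in a..b, (τ * CF) ^ 2 * (2 * L ^ 2 + 2 * ‖iteratedDeriv m φ x‖ ^ 2))
        = (τ * CF) ^ 2 * (2 * L ^ 2 * (b - a) + 2 * ∫ x in a..b, ‖iteratedDeriv m φ x‖ ^ 2) := by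
      rw [intervalIntegral.integral_const_mul]
      congr 1
      rw [intervalIntegral.integral_add (intervalIntegrable_const)
        (Continuous.intervalIntegrable (by fun_prop) _ _),
        intervalIntegral.integral_const_mul, intervalIntegral.integral_const]
      simp [smul_eq_mul]
      ring
    rw [hsplit]
    have h6 := hB2 m le_rfl
    exact mul_le_mul_of_nonneg_left (by linarith) (sq_nonneg (τ * CF))
  -- sum up
  unfold GPE.sobNorm
  have hsum : (∑ k ∈ Finset.range (m+1), ∫ x in a..b,
        ‖iteratedDeriv k (fun y => φ y * u y) x‖ ^ 2)
      ≤ ((m:ℝ)+1) * ((τ * CF) ^ 2 * (2 * L ^ 2 * (b - a) + 2 * B ^ 2)) := by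
    calc (∑ k ∈ Finset.range (m+1), ∫ x in a..b,
          ‖iteratedDeriv k (fun y => φ y * u y) x‖ ^ 2)
        ≤ ∑ k ∈ Finset.range (m+1),
            (τ * CF) ^ 2 * (2 * L ^ 2 * (b - a) + 2 * B ^ 2) :=
          Finset.sum_le_sum fun k hk => hIk k (Nat.lt_succ_iff.mp (Finset.mem_range.mp hk))
      _ = ((m:ℝ)+1) * ((τ * CF) ^ 2 * (2 * L ^ 2 * (b - a) + 2 * B ^ 2)) := by
          rw [Finset.sum_const, Finset.card_range, nsmul_eq_mul]
          push_cast
          ring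
  have hCsq : C ^ 2 = ((m:ℝ) + 1) * (CF ^ 2 * (2 * L ^ 2 * (b - a) + 2 * B ^ 2)) := by
    rw [hCdef]; exact Real.sq_sqrt hinner.le
  have hfin : (∑ k ∈ Finset.range (m+1), ∫ x in a..b,
        ‖iteratedDeriv k (fun y => φ y * u y) x‖ ^ 2) ≤ (C * τ) ^ 2 := by
    refine hsum.trans (le_of_eq ?_)
    calc ((m:ℝ)+1) * ((τ * CF) ^ 2 * (2 * L ^ 2 * (b - a) + 2 * B ^ 2))
        = (((m:ℝ)+1) * (CF ^ 2 * (2 * L ^ 2 * (b - a) + 2 * B ^ 2))) * τ ^ 2 := by ring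
      _ = C ^ 2 * τ ^ 2 := by rw [hCsq]
      _ = (C * τ) ^ 2 := by ring
  calc Real.sqrt (∑ k ∈ Finset.range (m+1), ∫ x in a..b,
        ‖iteratedDeriv k (fun y => φ y * u y) x‖ ^ 2)
      ≤ Real.sqrt ((C * τ) ^ 2) := Real.sqrt_le_sqrt hfin
    _ = C * τ := Real.sqrt_sq (by positivity)

end MainProof
end
end

section
/- Let V be any real-valued measurable function on Ω, β ∈ ℝ and M > 0. There exists a constant C > 0, depending only on β and M, such that for every positive even integer N, every τ > 0, and all v, w ∈ X_N with ‖v‖_{L^∞(Ω)} ≤ M and ‖w‖_{L^∞(Ω)} ≤ M, one has ‖ Φ_τ(v) − Φ_τ(w) ‖_{L²(Ω)} ≤ (1 + Cτ) ‖ v − w ‖_{L²(Ω)}. -/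
open MeasureTheory
open scoped Real

noncomputable section

open Complex in
section
open scoped Real

namespace GPEStab

lemma sum_zpow_Ico (z : ℂ) (hz0 : z ≠ 0) (hz1 : z ≠ 1) (N : ℕ) (hzN : z ^ (N:ℤ) = 1) (m : ℤ) :
    ∑ l ∈ Finset.Ico m (m + N), z ^ l = 0 := by
  have h1 : ∑ l ∈ Finset.Ico m (m + N), z ^ l = ∑ j ∈ Finset.range N, z ^ (m + (j:ℤ)) := by
    refine Finset.sum_nbij' (fun l => (l - m).toNat) (fun j => m + (j : ℤ)) ?_ ?_ ?_ ?_ ?_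
    · intro l hl; simp only [Finset.mem_Ico] at hl; simp only [Finset.mem_range]; omega
    · intro j hj; simp only [Finset.mem_range] at hj; simp only [Finset.mem_Ico]; omega
    · intro l hl; simp only [Finset.mem_Ico] at hl; omega
    · intro j hj; simp only [Finset.mem_range] at hj; omega
    · intro l hl; simp only [Finset.mem_Ico] at hl; congr 1; omega
  rw [h1]
  have h2 : ∀ j ∈ Finset.range N, z ^ (m + (j:ℤ)) = z ^ m * z ^ (j:ℕ) := by
    intro j _; rw [zpow_add₀ hz0, zpow_natCast]
  rw [Finset.sum_congr rfl h2, ← Finset.mul_sum, geom_sum_eq hz1]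
  rw [show z ^ N = z ^ ((N:ℕ):ℤ) from (zpow_natCast z N).symm, hzN]
  simp

lemma zpow_exp_eq (d : ℤ) (N : ℕ) (k : ℤ) :
    Complex.exp (2 * π * I * d / N) ^ k = Complex.exp (2 * π * I * (d * k) / N) := by
  rw [← Complex.exp_int_mul]; congr 1; ring

lemma exp_ne_one (d : ℤ) (N : ℕ) (hN : 0 < N) (hd : ¬ ((N:ℤ) ∣ d)) :
    Complex.exp (2 * π * I * d / N) ≠ 1 := by
  intro h
  rw [Complex.exp_eq_one_iff] at h
  obtain ⟨n, hn⟩ := h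
  have hπ : (π : ℂ) ≠ 0 := by exact_mod_cast Real.pi_ne_zero
  have hNc : (N : ℂ) ≠ 0 := by exact_mod_cast hN.ne'
  have hI : (2:ℂ) * π * I ≠ 0 := by simp [Complex.I_ne_zero, hπ]
  have h2 : (d : ℂ) = n * N := by
    refine mul_left_cancel₀ hI ?_
    have hn' : (2:ℂ) * π * I * d = n * (2 * π * I) * N := by
      field_simp at hn; linear_combination (2 * π * I) * hn
    linear_combination hn'
  have h4 : d = n * N := by exact_mod_cast h2
  exact hd ⟨n, by rw [h4, mul_comm]⟩

lemma exp_pow_N (d : ℤ) (N : ℕ) (hN : 0 < N) :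
    Complex.exp (2 * π * I * d / N) ^ ((N:ℕ):ℤ) = 1 := by
  rw [zpow_exp_eq]
  have hNc : (N : ℂ) ≠ 0 := by exact_mod_cast hN.ne'
  have h : (2 * π * I * ((d:ℂ) * ((N:ℤ):ℂ)) / N : ℂ) = d * (2 * π * I) := by
    push_cast; field_simp
  rw [h, Complex.exp_int_mul_two_pi_mul_I]

lemma sum_range_exp (N : ℕ) (hN : 0 < N) (d : ℤ) (hd : ¬ ((N:ℤ) ∣ d)) :
    ∑ j ∈ Finset.range N, Complex.exp (2 * π * I * (d * j) / N) = 0 := by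
  have h1 : ∀ j ∈ Finset.range N, Complex.exp (2 * π * I * (d * j) / N)
      = Complex.exp (2 * π * I * d / N) ^ (j : ℤ) := by
    intro j _; rw [zpow_exp_eq]; norm_cast
  rw [Finset.sum_congr rfl h1]
  have h2 : ∀ j ∈ Finset.range N, Complex.exp (2 * π * I * d / N) ^ (j:ℤ)
      = Complex.exp (2 * π * I * d / N) ^ (j:ℕ) := fun j _ => zpow_natCast _ j
  rw [Finset.sum_congr rfl h2, geom_sum_eq (exp_ne_one d N hN hd)]
  rw [show Complex.exp (2 * π * I * d / N) ^ N
      = Complex.exp (2 * π * I * d / N) ^ ((N:ℕ):ℤ) from (zpow_natCast _ N).symm,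
    exp_pow_N d N hN]
  simp

lemma sum_idx_exp (N : ℕ) (hN : 0 < N) (hNe : Even N) (d : ℤ) (hd : ¬ ((N:ℤ) ∣ d)) :
    ∑ l ∈ GPE.idxSet N, Complex.exp (2 * π * I * (d * l) / N) = 0 := by
  have hIco : GPE.idxSet N = Finset.Ico (-(N : ℤ) / 2) (-(N : ℤ) / 2 + N) := by
    unfold GPE.idxSet
    congr 1
    obtain ⟨k, hk⟩ := hNe
    omega
  have h1 : ∀ l ∈ Finset.Ico (-(N : ℤ) / 2) (-(N : ℤ) / 2 + N),
      Complex.exp (2 * π * I * (d * l) / N) = Complex.exp (2 * π * I * d / N) ^ l := by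
    intro l _; rw [zpow_exp_eq]
  rw [hIco, Finset.sum_congr rfl h1]
  exact sum_zpow_Ico _ (Complex.exp_ne_zero _) (exp_ne_one d N hN hd) N (exp_pow_N d N hN) _

end GPEStab
end

section GridOrth
open Complex GPE
open scoped Real

variable (a b : ℝ) (N : ℕ)

lemma not_dvd_of_idx {N : ℕ} (hN : 0 < N) {l m : ℤ} (hl : l ∈ idxSet N) (hm : m ∈ idxSet N)
    (hlm : l ≠ m) : ¬ ((N:ℤ) ∣ (l - m)) := by
  intro hdvd
  simp only [idxSet, Finset.mem_Ico] at hl hm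
  have h0 : l - m = 0 := by
    refine Int.eq_zero_of_dvd_of_natAbs_lt_natAbs hdvd ?_
    have h1 : (l - m).natAbs < N := by omega
    simpa using h1
  omega

lemma freq_grid_real (hab : a < b) (hN : 0 < N) (l : ℤ) (j : ℕ) :
    freq a b l * (gridPt a b N j - a) = 2 * π * l * j / N := by
  unfold freq gridPt
  have hba : (b - a : ℝ) ≠ 0 := sub_ne_zero.2 hab.ne'
  have hNc : (N : ℝ) ≠ 0 := by exact_mod_cast hN.ne'
  field_simp
  ring

lemma eMode_grid (hab : a < b) (hN : 0 < N) (l : ℤ) (j : ℕ) :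
    eMode a b l (gridPt a b N j) = Complex.exp (2 * π * I * (l * j) / N) := by
  unfold eMode
  rw [freq_grid_real a b N hab hN]
  congr 1
  push_cast
  ring

lemma exp_neg_grid (hab : a < b) (hN : 0 < N) (l : ℤ) (j : ℕ) :
    Complex.exp (-(I * ((freq a b l * (gridPt a b N j - a) : ℝ) : ℂ)))
      = Complex.exp (2 * π * I * ((-l : ℤ) * j) / N) := by
  rw [freq_grid_real a b N hab hN]
  congr 1
  push_cast
  ring

/-- Discrete orthogonality, sum over grid points. -/
lemma orth_grid (hab : a < b) (hN : 0 < N) {l m : ℤ}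
    (hl : l ∈ idxSet N) (hm : m ∈ idxSet N) :
    ∑ j ∈ Finset.range N,
        eMode a b l (gridPt a b N j) *
          Complex.exp (-(I * ((freq a b m * (gridPt a b N j - a) : ℝ) : ℂ)))
      = if l = m then (N : ℂ) else 0 := by
  have hterm : ∀ j ∈ Finset.range N,
      eMode a b l (gridPt a b N j) *
        Complex.exp (-(I * ((freq a b m * (gridPt a b N j - a) : ℝ) : ℂ)))
      = Complex.exp (2 * π * I * (((l - m : ℤ)) * j) / N) := by
    intro j _
    rw [eMode_grid a b N hab hN, exp_neg_grid a b N hab hN, ← Complex.exp_add]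
    congr 1
    have hNc : (N : ℂ) ≠ 0 := by exact_mod_cast hN.ne'
    push_cast
    field_simp
    ring
  rw [Finset.sum_congr rfl hterm]
  by_cases hlm : l = m
  · subst hlm
    simp
  · rw [if_neg hlm]
    exact GPEStab.sum_range_exp N hN (l - m) (not_dvd_of_idx hN hl hm hlm)

/-- Discrete orthogonality, sum over frequencies. -/
lemma orth_freq (hab : a < b) (hN : 0 < N) (hNe : Even N) {j k : ℕ}
    (hj : j ∈ Finset.range N) (hk : k ∈ Finset.range N) :
    ∑ l ∈ idxSet N,
        Complex.exp (-(I * ((freq a b l * (gridPt a b N j - a) : ℝ) : ℂ))) *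
          eMode a b l (gridPt a b N k)
      = if j = k then (N : ℂ) else 0 := by
  have hterm : ∀ l ∈ idxSet N,
      Complex.exp (-(I * ((freq a b l * (gridPt a b N j - a) : ℝ) : ℂ))) *
        eMode a b l (gridPt a b N k)
      = Complex.exp (2 * π * I * ((((k : ℤ) - (j : ℤ) : ℤ) : ℂ) * (l : ℂ)) / N) := by
    intro l _
    rw [eMode_grid a b N hab hN, exp_neg_grid a b N hab hN, ← Complex.exp_add]
    congr 1
    have hNc : (N : ℂ) ≠ 0 := by exact_mod_cast hN.ne'
    push_cast
    field_simp
    ring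
  rw [Finset.sum_congr rfl hterm]
  simp only [Finset.mem_range] at hj hk
  by_cases hjk : j = k
  · subst hjk
    simp only [sub_self, Int.cast_zero, zero_mul, mul_zero, zero_div, Complex.exp_zero, if_pos rfl, if_true]
    rw [Finset.sum_const]
    simp only [idxSet, Int.card_Ico, nsmul_eq_mul, mul_one]
    obtain ⟨kk, hk2⟩ := hNe
    norm_cast
    omega
  · rw [if_neg hjk]
    refine GPEStab.sum_idx_exp N hN hNe _ ?_
    intro hdvd
    have h0 : (k : ℤ) - (j : ℤ) = 0 := by
      refine Int.eq_zero_of_dvd_of_natAbs_lt_natAbs hdvd ?_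
      have h1 : ((k:ℤ) - (j:ℤ)).natAbs < N := by omega
      simpa using h1
    omega

end GridOrth

section ContOrth
open Complex GPE MeasureTheory intervalIntegral
open scoped Real

variable (a b : ℝ)

lemma continuous_eMode (l : ℤ) : Continuous (eMode a b l) := by
  unfold eMode
  fun_prop

lemma continuous_negMode (l : ℤ) :
    Continuous (fun x => Complex.exp (-(I * ((freq a b l * (x - a) : ℝ) : ℂ)))) := by
  fun_prop

lemma conj_eMode (l : ℤ) (x : ℝ) :
    (starRingEnd ℂ) (eMode a b l x) = Complex.exp (-(I * ((freq a b l * (x - a) : ℝ) : ℂ))) := by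
  unfold eMode
  rw [← Complex.exp_conj]
  congr 1
  simp [Complex.conj_I]

lemma mul_conj_norm (z : ℂ) : z * (starRingEnd ℂ) z = ((‖z‖^2 : ℝ) : ℂ) := by
  rw [Complex.mul_conj]
  norm_cast
  rw [Complex.normSq_eq_norm_sq]

lemma interval_re (c d : ℝ) (hcd : c ≤ d) (f : ℝ → ℂ) (hf : IntervalIntegrable f volume c d) :
    ∫ x in c..d, (f x).re = (∫ x in c..d, f x).re := by
  rw [intervalIntegral.integral_of_le hcd, intervalIntegral.integral_of_le hcd]
  exact integral_re hf.1

/-- Continuous orthogonality of Fourier modes on (a,b). -/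
lemma cont_orth (hab : a < b) (l m : ℤ) :
    (∫ x in a..b, eMode a b l x * Complex.exp (-(I * ((freq a b m * (x - a) : ℝ) : ℂ))))
      = if l = m then ((b - a : ℝ) : ℂ) else 0 := by
  have hba : (b - a : ℝ) ≠ 0 := sub_ne_zero.2 hab.ne'
  by_cases hlm : l = m
  · subst hlm
    rw [if_pos rfl]
    have h1 : ∀ x : ℝ, eMode a b l x * Complex.exp (-(I * ((freq a b l * (x - a) : ℝ) : ℂ)))
        = 1 := by
      intro x
      unfold eMode
      rw [← Complex.exp_add]
      simp
    simp only [h1]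
    simp
  · rw [if_neg hlm]
    set r : ℝ := freq a b (l - m) with hr
    have hrne : r ≠ 0 := by
      rw [hr]
      unfold freq
      apply div_ne_zero
      · have : ((l - m : ℤ) : ℝ) ≠ 0 := by
          exact_mod_cast sub_ne_zero.2 hlm
        positivity
      · exact hba
    have hcne : I * (r : ℂ) ≠ 0 := mul_ne_zero I_ne_zero (by exact_mod_cast hrne)
    have h1 : ∀ x : ℝ, eMode a b l x * Complex.exp (-(I * ((freq a b m * (x - a) : ℝ) : ℂ)))
        = Complex.exp ((I * (r:ℂ)) * x) * Complex.exp (-((I * (r:ℂ)) * a)) := by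
      intro x
      unfold eMode
      rw [← Complex.exp_add, ← Complex.exp_add]
      congr 1
      have hreal : freq a b l * (x - a) - freq a b m * (x - a) = r * x - r * a := by
        rw [hr]; unfold freq; push_cast; ring
      have h5 : ((freq a b l * (x - a) : ℝ) : ℂ) - ((freq a b m * (x - a) : ℝ) : ℂ)
          = (r : ℂ) * x - (r : ℂ) * a := by
        exact_mod_cast congrArg Complex.ofReal hreal
      linear_combination I * h5
    simp only [h1]
    rw [intervalIntegral.integral_mul_const, integral_exp_mul_complex hcne]
    rw [div_mul_eq_mul_div, sub_mul, ← Complex.exp_add, ← Complex.exp_add]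
    have h2 : I * (r:ℂ) * b + -(I * (r:ℂ) * a) = ((l - m : ℤ) : ℂ) * (2 * π * I) := by
      have hrba : r * (b - a) = 2 * π * (l - m) := by
        rw [hr]; unfold freq; field_simp; exact Int.cast_sub l m
      have : (r : ℂ) * ((b:ℂ) - a) = 2 * π * ((l:ℂ) - m) := by
        exact_mod_cast congrArg Complex.ofReal hrba
      push_cast
      linear_combination I * this
    rw [h2, Complex.exp_int_mul_two_pi_mul_I]
    simp

/-- L² norm of a trigonometric polynomial. -/
lemma integral_sq_trig (hab : a < b) (N : ℕ) (c : ℤ → ℂ) :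
    ∫ x in a..b, ‖∑ l ∈ idxSet N, c l * eMode a b l x‖^2
      = (b - a) * ∑ l ∈ idxSet N, ‖c l‖^2 := by
  set S : ℝ → ℂ := fun x => ∑ l ∈ idxSet N, c l * eMode a b l x with hS
  have hScont : Continuous S := by
    apply continuous_finset_sum
    intro l _
    exact continuous_const.mul (continuous_eMode a b l)
  have hprod : ∀ x : ℝ, S x * (starRingEnd ℂ) (S x)
      = ∑ l ∈ idxSet N, ∑ m ∈ idxSet N, (c l * (starRingEnd ℂ) (c m)) *
          (eMode a b l x * Complex.exp (-(I * ((freq a b m * (x - a) : ℝ) : ℂ)))) := by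
    intro x
    rw [hS]
    simp only [map_sum, map_mul]
    rw [Finset.sum_mul_sum]
    refine Finset.sum_congr rfl fun l _ => Finset.sum_congr rfl fun m _ => ?_
    rw [conj_eMode]
    unfold eMode
    push_cast
    ring
  have hC : (∫ x in a..b, S x * (starRingEnd ℂ) (S x))
      = (((b - a) * ∑ l ∈ idxSet N, ‖c l‖^2 : ℝ) : ℂ) := by
    simp only [hprod]
    rw [intervalIntegral.integral_finset_sum]
    swap
    · intro l _
      apply Continuous.intervalIntegrable
      apply continuous_finset_sum
      intro m _
      exact continuous_const.mul ((continuous_eMode a b l).mul (continuous_negMode a b m))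
    have : ∀ l ∈ idxSet N,
        (∫ x in a..b, ∑ m ∈ idxSet N, (c l * (starRingEnd ℂ) (c m)) *
          (eMode a b l x * Complex.exp (-(I * ((freq a b m * (x - a) : ℝ) : ℂ)))))
        = c l * (starRingEnd ℂ) (c l) * ((b - a : ℝ) : ℂ) := by
      intro l hl
      rw [intervalIntegral.integral_finset_sum]
      swap
      · intro m _
        apply Continuous.intervalIntegrable
        exact continuous_const.mul ((continuous_eMode a b l).mul (continuous_negMode a b m))
      have h2 : ∀ m ∈ idxSet N,
          (∫ x in a..b, (c l * (starRingEnd ℂ) (c m)) *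
            (eMode a b l x * Complex.exp (-(I * ((freq a b m * (x - a) : ℝ) : ℂ)))))
          = (c l * (starRingEnd ℂ) (c m)) * (if l = m then ((b - a : ℝ) : ℂ) else 0) := by
        intro m _
        rw [intervalIntegral.integral_const_mul, cont_orth a b hab l m]
      rw [Finset.sum_congr rfl h2]
      rw [Finset.sum_eq_single_of_mem l hl]
      · rw [if_pos rfl]
      · intro m _ hml
        rw [if_neg (Ne.symm hml), mul_zero]
    rw [Finset.sum_congr rfl this]
    have h3 : ∀ l ∈ idxSet N, c l * (starRingEnd ℂ) (c l) * ((b - a : ℝ) : ℂ)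
        = ((((b:ℝ) - a) * ‖c l‖^2 : ℝ) : ℂ) := by
      intro l _
      rw [mul_conj_norm]
      push_cast
      ring
    rw [Finset.sum_congr rfl h3]
    rw [← Complex.ofReal_sum]
    congr 1
    rw [Finset.mul_sum]
  have hre : ∀ x : ℝ, ‖S x‖^2 = (S x * (starRingEnd ℂ) (S x)).re := by
    intro x
    rw [mul_conj_norm, Complex.ofReal_re]
  have hcont2 : Continuous (fun x => S x * (starRingEnd ℂ) (S x)) :=
    hScont.mul (continuous_star.comp hScont)
  show (∫ x in a..b, ‖S x‖^2) = _
  simp only [hre]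
  rw [interval_re a b hab.le _ (hcont2.intervalIntegrable a b), hC]
  exact Complex.ofReal_re _

section Bessel
open Complex GPE MeasureTheory intervalIntegral
open scoped Real

variable (a b : ℝ)

lemma norm_exp_neg_I (r : ℝ) : ‖Complex.exp (-(I * (r : ℂ)))‖ = 1 := by
  rw [Complex.norm_exp]
  simp

lemma norm_eMode (l : ℤ) (x : ℝ) : ‖eMode a b l x‖ = 1 := by
  unfold eMode
  rw [Complex.norm_exp]
  simp

lemma intervalIntegrable_of_bdd {g : ℝ → ℂ} (hab : a ≤ b)
    (hmeas : AEStronglyMeasurable g (volume.restrict (Set.Ioc a b))) (K : ℝ)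
    (hK : ∀ x ∈ Set.Ioc a b, ‖g x‖ ≤ K) : IntervalIntegrable g volume a b := by
  rw [intervalIntegrable_iff_integrableOn_Ioc_of_le hab]
  refine Integrable.mono' (integrable_const K) hmeas ?_
  rw [ae_restrict_iff' measurableSet_Ioc]
  exact ae_of_all _ hK

lemma intervalIntegrable_norm_sq_of_bdd {g : ℝ → ℂ} (hab : a ≤ b)
    (hmeas : AEStronglyMeasurable g (volume.restrict (Set.Ioc a b))) (K : ℝ)
    (hK : ∀ x ∈ Set.Ioc a b, ‖g x‖ ≤ K) :
    IntervalIntegrable (fun x => ‖g x‖^2) volume a b := by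
  rw [intervalIntegrable_iff_integrableOn_Ioc_of_le hab]
  refine Integrable.mono' (integrable_const (K^2)) ?_ ?_
  · have h1 : AEStronglyMeasurable (fun x => ‖g x‖) (volume.restrict (Set.Ioc a b)) :=
      hmeas.norm
    have h2 := h1.mul h1
    exact h1.pow 2
  · rw [ae_restrict_iff' measurableSet_Ioc]
    refine ae_of_all _ fun x hx => ?_
    have h3 := hK x hx
    have h4 : (0:ℝ) ≤ ‖g x‖ := norm_nonneg _
    rw [Real.norm_eq_abs, _root_.abs_of_nonneg (sq_nonneg _)]
    nlinarith

/-- Bessel's inequality for the first N Fourier coefficients. -/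
lemma bessel (hab : a < b) (N : ℕ) (g : ℝ → ℂ)
    (hmeas : AEStronglyMeasurable g (volume.restrict (Set.Ioc a b)))
    (K : ℝ) (hK : ∀ x ∈ Set.Ioc a b, ‖g x‖ ≤ K) :
    (b - a) * ∑ l ∈ idxSet N, ‖GPE.fourierCoeffOn a b g l‖^2 ≤ ∫ x in a..b, ‖g x‖^2 := by
  have hL : (0:ℝ) < b - a := sub_pos.2 hab
  have hLne : ((b - a : ℝ) : ℂ) ≠ 0 := by exact_mod_cast hL.ne'
  set u : ℤ → ℂ := fun l => GPE.fourierCoeffOn a b g l with hu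
  set s : ℝ → ℂ := fun x => ∑ l ∈ idxSet N, u l * eMode a b l x with hs
  have hscont : Continuous s := by
    apply continuous_finset_sum
    intro l _
    exact continuous_const.mul (continuous_eMode a b l)
  -- integrability facts
  have hGmode : ∀ l : ℤ, IntervalIntegrable
      (fun x => g x * Complex.exp (-(I * ((freq a b l * (x - a) : ℝ) : ℂ)))) volume a b := by
    intro l
    refine intervalIntegrable_of_bdd a b hab.le
      (hmeas.mul (continuous_negMode a b l).aestronglyMeasurable) K fun x hx => ?_
    rw [norm_mul, norm_exp_neg_I, mul_one]
    exact hK x hx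
  have hmode_int : ∀ l : ℤ,
      (∫ x in a..b, g x * Complex.exp (-(I * ((freq a b l * (x - a) : ℝ) : ℂ))))
        = ((b - a : ℝ) : ℂ) * u l := by
    intro l
    rw [hu]
    unfold GPE.fourierCoeffOn
    rw [← mul_assoc, mul_inv_cancel₀ hLne, one_mul]
  have hgs : IntervalIntegrable (fun x => g x * (starRingEnd ℂ) (s x)) volume a b := by
    refine intervalIntegrable_of_bdd a b hab.le
      (hmeas.mul (continuous_star.comp hscont).aestronglyMeasurable)
      (K * ∑ l ∈ idxSet N, ‖u l‖) fun x hx => ?_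
    rw [norm_mul]
    have h5 : ‖(starRingEnd ℂ) (s x)‖ ≤ ∑ l ∈ idxSet N, ‖u l‖ := by
      rw [RCLike.norm_conj]
      refine le_trans (norm_sum_le _ _) ?_
      refine Finset.sum_le_sum fun l _ => ?_
      rw [norm_mul, norm_eMode, mul_one]
    exact mul_le_mul (hK x hx) h5 (norm_nonneg _) ((norm_nonneg (g x)).trans (hK x hx))
  have hg2 : IntervalIntegrable (fun x => ‖g x‖^2) volume a b :=
    intervalIntegrable_norm_sq_of_bdd a b hab.le hmeas K hK
  have hs2 : IntervalIntegrable (fun x => ‖s x‖^2) volume a b :=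
    ((hscont.norm.pow 2)).intervalIntegrable a b
  have hgsre : IntervalIntegrable (fun x => (g x * (starRingEnd ℂ) (s x)).re) volume a b :=
    ⟨hgs.1.re, hgs.2.re⟩
  -- pointwise expansion
  have hexp : ∀ x : ℝ, ‖g x - s x‖^2
      = ‖g x‖^2 - 2 * ((g x * (starRingEnd ℂ) (s x)).re) + ‖s x‖^2 := by
    intro x
    set z := g x; set w := s x
    have h : (z - w) * (starRingEnd ℂ) (z - w)
        = z * (starRingEnd ℂ) z - (z * (starRingEnd ℂ) w + (starRingEnd ℂ) (z * (starRingEnd ℂ) w))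
          + w * (starRingEnd ℂ) w := by
      simp only [map_sub, map_mul, Complex.conj_conj]
      ring
    have h1 : ‖z - w‖^2 = ((z - w) * (starRingEnd ℂ) (z - w)).re := by
      rw [mul_conj_norm, Complex.ofReal_re]
    rw [h1, h, Complex.add_re, Complex.sub_re, Complex.add_conj, mul_conj_norm z,
      mul_conj_norm w]
    simp only [Complex.ofReal_re]
  -- cross term
  have hcross : (∫ x in a..b, (g x * (starRingEnd ℂ) (s x)).re)
      = (b - a) * ∑ l ∈ idxSet N, ‖u l‖^2 := by
    rw [interval_re a b hab.le _ hgs]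
    have h6 : ∀ x : ℝ, g x * (starRingEnd ℂ) (s x)
        = ∑ l ∈ idxSet N, (starRingEnd ℂ) (u l) *
            (g x * Complex.exp (-(I * ((freq a b l * (x - a) : ℝ) : ℂ)))) := by
      intro x
      rw [hs]
      simp only [map_sum, map_mul]
      rw [Finset.mul_sum]
      refine Finset.sum_congr rfl fun l _ => ?_
      rw [conj_eMode]
      ring
    simp only [h6]
    rw [intervalIntegral.integral_finset_sum]
    swap
    · intro l _
      exact (hGmode l).const_mul _
    have h7 : ∀ l ∈ idxSet N,
        (∫ x in a..b, (starRingEnd ℂ) (u l) *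
          (g x * Complex.exp (-(I * ((freq a b l * (x - a) : ℝ) : ℂ)))))
        = ((((b - a) * ‖u l‖^2 : ℝ)) : ℂ) := by
      intro l _
      rw [intervalIntegral.integral_const_mul, hmode_int l]
      rw [show (starRingEnd ℂ) (u l) * (((b - a : ℝ) : ℂ) * u l)
          = ((b - a : ℝ) : ℂ) * (u l * (starRingEnd ℂ) (u l)) by ring]
      rw [mul_conj_norm]
      push_cast
      ring
    rw [Finset.sum_congr rfl h7, ← Complex.ofReal_sum]
    rw [Complex.ofReal_re]
    rw [Finset.mul_sum]
  have hsint : (∫ x in a..b, ‖s x‖^2) = (b - a) * ∑ l ∈ idxSet N, ‖u l‖^2 := by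
    rw [hs]
    exact integral_sq_trig a b hab N u
  have hnonneg : (0:ℝ) ≤ ∫ x in a..b, ‖g x - s x‖^2 :=
    intervalIntegral.integral_nonneg hab.le (fun x _ => sq_nonneg _)
  have hsplit : (∫ x in a..b, ‖g x - s x‖^2)
      = (∫ x in a..b, ‖g x‖^2) - 2 * ((b - a) * ∑ l ∈ idxSet N, ‖u l‖^2)
        + ((b - a) * ∑ l ∈ idxSet N, ‖u l‖^2) := by
    simp only [hexp]
    rw [intervalIntegral.integral_add ((hg2.sub (hgsre.const_mul 2))) hs2]
    rw [intervalIntegral.integral_sub hg2 (hgsre.const_mul 2)]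
    rw [intervalIntegral.integral_const_mul, hcross, hsint]
  rw [hsplit] at hnonneg
  linarith

end Bessel

section DiscParseval
open Complex GPE MeasureTheory
open scoped Real

variable (a b : ℝ)

lemma conj_negMode (l : ℤ) (x : ℝ) :
    (starRingEnd ℂ) (Complex.exp (-(I * ((freq a b l * (x - a) : ℝ) : ℂ)))) = eMode a b l x := by
  rw [← conj_eMode, Complex.conj_conj]

/-- Discrete Parseval identity for arbitrary samples (complex form). -/
lemma discParseval_c (hab : a < b) (N : ℕ) (hN : 0 < N) (hNe : Even N) (g : ℝ → ℂ) :
    ∑ l ∈ idxSet N, discreteCoeff a b N g l * (starRingEnd ℂ) (discreteCoeff a b N g l)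
      = ((N:ℂ))⁻¹ * ∑ j ∈ Finset.range N,
          g (gridPt a b N j) * (starRingEnd ℂ) (g (gridPt a b N j)) := by
  have hNc : (N : ℂ) ≠ 0 := by exact_mod_cast hN.ne'
  have hstep : ∀ l ∈ idxSet N,
      discreteCoeff a b N g l * (starRingEnd ℂ) (discreteCoeff a b N g l)
      = ((N:ℂ)⁻¹ * (N:ℂ)⁻¹) * ∑ j ∈ Finset.range N, ∑ k ∈ Finset.range N,
          (g (gridPt a b N j) * (starRingEnd ℂ) (g (gridPt a b N k))) *
            (Complex.exp (-(I * ((freq a b l * (gridPt a b N j - a) : ℝ) : ℂ))) *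
              eMode a b l (gridPt a b N k)) := by
    intro l _
    unfold discreteCoeff
    simp only [map_mul, map_sum, map_inv₀, Complex.conj_natCast]
    rw [mul_mul_mul_comm, Finset.sum_mul_sum]
    congr 1
    refine Finset.sum_congr rfl fun j _ => Finset.sum_congr rfl fun k _ => ?_
    rw [conj_negMode]
    ring
  rw [Finset.sum_congr rfl hstep, ← Finset.mul_sum]
  rw [Finset.sum_comm]
  have hinner : ∀ j ∈ Finset.range N,
      (∑ l ∈ idxSet N, ∑ k ∈ Finset.range N,
        (g (gridPt a b N j) * (starRingEnd ℂ) (g (gridPt a b N k))) *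
          (Complex.exp (-(I * ((freq a b l * (gridPt a b N j - a) : ℝ) : ℂ))) *
            eMode a b l (gridPt a b N k)))
      = (g (gridPt a b N j) * (starRingEnd ℂ) (g (gridPt a b N j))) * (N:ℂ) := by
    intro j hj
    rw [Finset.sum_comm]
    have h2 : ∀ k ∈ Finset.range N,
        (∑ l ∈ idxSet N,
          (g (gridPt a b N j) * (starRingEnd ℂ) (g (gridPt a b N k))) *
            (Complex.exp (-(I * ((freq a b l * (gridPt a b N j - a) : ℝ) : ℂ))) *
              eMode a b l (gridPt a b N k)))
        = (g (gridPt a b N j) * (starRingEnd ℂ) (g (gridPt a b N k))) *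
            (if j = k then (N:ℂ) else 0) := by
      intro k hk
      rw [← Finset.mul_sum, orth_freq a b N hab hN hNe hj hk]
    rw [Finset.sum_congr rfl h2]
    rw [Finset.sum_eq_single_of_mem j hj]
    · rw [if_pos rfl]
    · intro k _ hkj
      rw [if_neg (Ne.symm hkj), mul_zero]
  rw [Finset.sum_congr rfl hinner]
  have h3 : ∀ j ∈ Finset.range N,
      (g (gridPt a b N j) * (starRingEnd ℂ) (g (gridPt a b N j))) * (N:ℂ)
      = (N:ℂ) * (g (gridPt a b N j) * (starRingEnd ℂ) (g (gridPt a b N j))) :=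
    fun j _ => mul_comm _ _
  rw [Finset.sum_congr rfl h3, ← Finset.mul_sum, ← mul_assoc]
  congr 1
  field_simp

/-- Discrete Parseval identity for arbitrary samples (real form). -/
lemma discParseval (hab : a < b) (N : ℕ) (hN : 0 < N) (hNe : Even N) (g : ℝ → ℂ) :
    ∑ l ∈ idxSet N, ‖discreteCoeff a b N g l‖^2
      = (N:ℝ)⁻¹ * ∑ j ∈ Finset.range N, ‖g (gridPt a b N j)‖^2 := by
  have h := discParseval_c a b hab N hN hNe g
  rw [← Complex.ofReal_inj]
  calc (((∑ l ∈ idxSet N, ‖discreteCoeff a b N g l‖^2 : ℝ)) : ℂ)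
      = ∑ l ∈ idxSet N, discreteCoeff a b N g l * (starRingEnd ℂ) (discreteCoeff a b N g l) := by
        rw [Complex.ofReal_sum]
        exact Finset.sum_congr rfl fun l _ => (mul_conj_norm _).symm
    _ = ((N:ℂ))⁻¹ * ∑ j ∈ Finset.range N,
          g (gridPt a b N j) * (starRingEnd ℂ) (g (gridPt a b N j)) := h
    _ = (((N:ℝ)⁻¹ * ∑ j ∈ Finset.range N, ‖g (gridPt a b N j)‖^2 : ℝ) : ℂ) := by
        have h4 : ∀ j ∈ Finset.range N,
            g (gridPt a b N j) * (starRingEnd ℂ) (g (gridPt a b N j))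
            = ((‖g (gridPt a b N j)‖^2 : ℝ) : ℂ) := fun j _ => mul_conj_norm _
        rw [Finset.sum_congr rfl h4, ← Complex.ofReal_sum]
        push_cast
        ring

/-- Discrete Parseval for trigonometric polynomials (complex form). -/
lemma discParsevalXN_c (hab : a < b) (N : ℕ) (hN : 0 < N) (c : ℤ → ℂ) :
    ∑ j ∈ Finset.range N,
        (∑ l ∈ idxSet N, c l * eMode a b l (gridPt a b N j)) *
          (starRingEnd ℂ) (∑ l ∈ idxSet N, c l * eMode a b l (gridPt a b N j))
      = (N:ℂ) * ∑ l ∈ idxSet N, c l * (starRingEnd ℂ) (c l) := by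
  have hstep : ∀ j ∈ Finset.range N,
      (∑ l ∈ idxSet N, c l * eMode a b l (gridPt a b N j)) *
        (starRingEnd ℂ) (∑ l ∈ idxSet N, c l * eMode a b l (gridPt a b N j))
      = ∑ l ∈ idxSet N, ∑ m ∈ idxSet N,
          (c l * (starRingEnd ℂ) (c m)) *
            (eMode a b l (gridPt a b N j) *
              Complex.exp (-(I * ((freq a b m * (gridPt a b N j - a) : ℝ) : ℂ)))) := by
    intro j _
    simp only [map_sum, map_mul]
    rw [Finset.sum_mul_sum]
    refine Finset.sum_congr rfl fun l _ => Finset.sum_congr rfl fun m _ => ?_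
    rw [conj_eMode]
    ring
  rw [Finset.sum_congr rfl hstep, Finset.sum_comm]
  have hinner : ∀ l ∈ idxSet N,
      (∑ j ∈ Finset.range N, ∑ m ∈ idxSet N,
        (c l * (starRingEnd ℂ) (c m)) *
          (eMode a b l (gridPt a b N j) *
            Complex.exp (-(I * ((freq a b m * (gridPt a b N j - a) : ℝ) : ℂ)))))
      = (c l * (starRingEnd ℂ) (c l)) * (N:ℂ) := by
    intro l hl
    rw [Finset.sum_comm]
    have h2 : ∀ m ∈ idxSet N,
        (∑ j ∈ Finset.range N,
          (c l * (starRingEnd ℂ) (c m)) *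
            (eMode a b l (gridPt a b N j) *
              Complex.exp (-(I * ((freq a b m * (gridPt a b N j - a) : ℝ) : ℂ)))))
        = (c l * (starRingEnd ℂ) (c m)) * (if l = m then (N:ℂ) else 0) := by
      intro m hm
      rw [← Finset.mul_sum, orth_grid a b N hab hN hl hm]
    rw [Finset.sum_congr rfl h2]
    rw [Finset.sum_eq_single_of_mem l hl]
    · rw [if_pos rfl]
    · intro m _ hml
      rw [if_neg (Ne.symm hml), mul_zero]
  rw [Finset.sum_congr rfl hinner]
  rw [Finset.mul_sum]
  exact Finset.sum_congr rfl fun l _ => mul_comm _ _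

/-- Discrete Parseval for trigonometric polynomials (real form). -/
lemma discParsevalXN (hab : a < b) (N : ℕ) (hN : 0 < N) (c : ℤ → ℂ) :
    (N:ℝ)⁻¹ * ∑ j ∈ Finset.range N,
        ‖∑ l ∈ idxSet N, c l * eMode a b l (gridPt a b N j)‖^2
      = ∑ l ∈ idxSet N, ‖c l‖^2 := by
  have hNr : (N : ℝ) ≠ 0 := by exact_mod_cast hN.ne'
  have h := discParsevalXN_c a b hab N hN c
  rw [← Complex.ofReal_inj]
  have h1 : ((∑ j ∈ Finset.range N,
      ‖∑ l ∈ idxSet N, c l * eMode a b l (gridPt a b N j)‖^2 : ℝ) : ℂ)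
      = (N:ℂ) * ∑ l ∈ idxSet N, c l * (starRingEnd ℂ) (c l) := by
    rw [Complex.ofReal_sum, ← h]
    exact Finset.sum_congr rfl fun j _ => (mul_conj_norm _).symm
  have h2 : ((∑ l ∈ idxSet N, ‖c l‖^2 : ℝ) : ℂ)
      = ∑ l ∈ idxSet N, c l * (starRingEnd ℂ) (c l) := by
    rw [Complex.ofReal_sum]
    exact Finset.sum_congr rfl fun l _ => (mul_conj_norm _).symm
  rw [Complex.ofReal_mul, Complex.ofReal_inv, Complex.ofReal_natCast, h1, h2, ← mul_assoc]
  have hNc : (N : ℂ) ≠ 0 := by exact_mod_cast hN.ne'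
  rw [inv_mul_cancel₀ hNc, one_mul]

end DiscParseval

section Lip
open Complex GPE
open scoped Real

lemma norm_exp_I_mul (r : ℝ) : ‖Complex.exp (I * (r : ℂ))‖ = 1 := by
  rw [Complex.norm_exp]
  simp

lemma exp_phase_diff (s t : ℝ) :
    ‖Complex.exp (-(I * (s : ℂ))) - Complex.exp (-(I * (t : ℂ)))‖ ≤ 2 * |s - t| := by
  have h1 : Complex.exp (-(I * (s : ℂ))) - Complex.exp (-(I * (t : ℂ)))
      = Complex.exp (-(I * (t : ℂ))) * (Complex.exp (I * ((t - s : ℝ) : ℂ)) - 1) := by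
    rw [mul_sub, mul_one, ← Complex.exp_add]
    congr 2
    push_cast
    ring
  rw [h1, norm_mul, norm_exp_neg_I, one_mul]
  have habs : ‖I * ((t - s : ℝ) : ℂ)‖ = |t - s| := by
    rw [norm_mul, Complex.norm_I, one_mul, Complex.norm_real, Real.norm_eq_abs]
  by_cases hc : |t - s| ≤ 1
  · have h2 := Complex.norm_exp_sub_one_le (x := I * ((t - s : ℝ) : ℂ)) (by rw [habs]; exact hc)
    rw [habs] at h2
    calc ‖Complex.exp (I * ((t - s : ℝ) : ℂ)) - 1‖ ≤ 2 * |t - s| := h2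
      _ = 2 * |s - t| := by rw [abs_sub_comm]
  · push_neg at hc
    have h3 : ‖Complex.exp (I * ((t - s : ℝ) : ℂ)) - 1‖ ≤ 2 := by
      calc ‖Complex.exp (I * ((t - s : ℝ) : ℂ)) - 1‖
          ≤ ‖Complex.exp (I * ((t - s : ℝ) : ℂ))‖ + ‖(1:ℂ)‖ := norm_sub_le _ _
        _ = 2 := by rw [norm_exp_I_mul]; norm_num
    calc ‖Complex.exp (I * ((t - s : ℝ) : ℂ)) - 1‖ ≤ 2 := h3
      _ ≤ 2 * |s - t| := by
          rw [abs_sub_comm]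
          nlinarith
  
lemma nl_lip (β τ M : ℝ) (hτ : 0 ≤ τ) (z w : ℂ) (hz : ‖z‖ ≤ M) (hw : ‖w‖ ≤ M) :
    ‖z * Complex.exp (-(I * ((τ * β * ‖z‖ ^ 2 : ℝ) : ℂ)))
      - w * Complex.exp (-(I * ((τ * β * ‖w‖ ^ 2 : ℝ) : ℂ)))‖
      ≤ (1 + 4 * |β| * M^2 * τ) * ‖z - w‖ := by
  have hM : (0:ℝ) ≤ M := (norm_nonneg z).trans hz
  set s : ℝ := τ * β * ‖z‖ ^ 2 with hs
  set t : ℝ := τ * β * ‖w‖ ^ 2 with ht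
  have hsplit : z * Complex.exp (-(I * (s : ℂ))) - w * Complex.exp (-(I * (t : ℂ)))
      = (z - w) * Complex.exp (-(I * (s : ℂ)))
        + w * (Complex.exp (-(I * (s : ℂ))) - Complex.exp (-(I * (t : ℂ)))) := by
    ring
  rw [hsplit]
  have h1 : ‖(z - w) * Complex.exp (-(I * (s : ℂ)))‖ = ‖z - w‖ := by
    rw [norm_mul, norm_exp_neg_I, mul_one]
  have habsz : ‖z‖ = ‖z‖ := rfl
  have habsw : ‖w‖ = ‖w‖ := rfl
  have hst : |s - t| ≤ 2 * |β| * M * τ * ‖z - w‖ := by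
    rw [hs, ht]
    have h4 : τ * β * ‖z‖ ^ 2 - τ * β * ‖w‖ ^ 2
        = τ * β * ((‖z‖ - ‖w‖) * (‖z‖ + ‖w‖)) := by
      ring
    rw [h4, abs_mul, abs_mul, abs_mul, _root_.abs_of_nonneg hτ]
    have h5 : |‖z‖ - ‖w‖| ≤ ‖z - w‖ := abs_norm_sub_norm_le z w
    have h6 : |‖z‖ + ‖w‖| ≤ 2 * M := by
      rw [_root_.abs_of_nonneg (by positivity)]
      linarith
    have h7 : (0:ℝ) ≤ τ * |β| := by positivity
    calc τ * |β| * (|‖z‖ - ‖w‖| * |‖z‖ + ‖w‖|)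
        ≤ τ * |β| * (‖z - w‖ * (2 * M)) := by
          apply mul_le_mul_of_nonneg_left _ h7
          apply mul_le_mul h5 h6 (abs_nonneg _) (norm_nonneg _)
      _ = 2 * |β| * M * τ * ‖z - w‖ := by ring
  have h2 : ‖w * (Complex.exp (-(I * (s : ℂ))) - Complex.exp (-(I * (t : ℂ))))‖
      ≤ 4 * |β| * M^2 * τ * ‖z - w‖ := by
    rw [norm_mul]
    calc ‖w‖ * ‖Complex.exp (-(I * (s : ℂ))) - Complex.exp (-(I * (t : ℂ)))‖
        ≤ M * (2 * |s - t|) := by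
          apply mul_le_mul hw (exp_phase_diff s t) (norm_nonneg _) hM
      _ ≤ M * (2 * (2 * |β| * M * τ * ‖z - w‖)) := by
          apply mul_le_mul_of_nonneg_left _ hM
          linarith
      _ = 4 * |β| * M^2 * τ * ‖z - w‖ := by ring
  calc ‖(z - w) * Complex.exp (-(I * (s : ℂ)))
        + w * (Complex.exp (-(I * (s : ℂ))) - Complex.exp (-(I * (t : ℂ))))‖
      ≤ ‖(z - w) * Complex.exp (-(I * (s : ℂ)))‖
        + ‖w * (Complex.exp (-(I * (s : ℂ))) - Complex.exp (-(I * (t : ℂ))))‖ := norm_add_le _ _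
    _ ≤ ‖z - w‖ + 4 * |β| * M^2 * τ * ‖z - w‖ := by
        rw [h1]
        linarith
    _ = (1 + 4 * |β| * M^2 * τ) * ‖z - w‖ := by ring

end Lip


open GPE in
/-- L²-stability of the LTeFP flow: for any real-valued measurable potential V, any τ > 0
and trigonometric polynomials v, w ∈ X_N with L^∞-bound M,
‖Φ_τ(v) − Φ_τ(w)‖_{L²} ≤ (1 + Cτ)‖v − w‖_{L²}, with C depending only on β and M. -/
theorem LTeFP_stability_L2
    (a b : ℝ) (hab : a < b) (β M : ℝ) (hM : 0 < M) :
    ∃ C > (0 : ℝ), ∀ V : ℝ → ℝ, Measurable V →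
      ∀ N : ℕ, 0 < N → Even N →
      ∀ τ : ℝ, 0 < τ →
      ∀ v w : ℝ → ℂ, MemXN a b N v → MemXN a b N w →
        (∀ x ∈ Set.Icc a b, ‖v x‖ ≤ M) →
        (∀ x ∈ Set.Icc a b, ‖w x‖ ≤ M) →
        sobNorm a b 0 (fun x => PhiLTeFP a b N V β τ v x - PhiLTeFP a b N V β τ w x)
          ≤ (1 + C * τ) * sobNorm a b 0 (fun x => v x - w x) := by
  have hL : (0:ℝ) < b - a := sub_pos.2 hab
  refine ⟨4 * |β| * M^2 + 1, by positivity, ?_⟩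
  intro V hV N hN hNe τ hτ v w hvX hwX hvM hwM
  obtain ⟨cv, hcv⟩ := hvX
  obtain ⟨cw, hcw⟩ := hwX
  have hNr : (N : ℝ) ≠ 0 := by exact_mod_cast hN.ne'
  -- abbreviations
  set c0 : ℝ := 4 * |β| * M^2 with hc0
  have hc0nn : (0:ℝ) ≤ c0 := by rw [hc0]; positivity
  set g0 : ℝ → ℂ := fun x => nlPhase β τ v x - nlPhase β τ w x with hg0
  set d : ℤ → ℂ := fun l => discreteCoeff a b N g0 l with hd
  set Δ : ℝ → ℂ := fun x => ∑ l ∈ idxSet N, d l * eMode a b l x with hΔdef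
  set E : ℝ → ℂ := fun x => Complex.exp (-(Complex.I * ((τ * V x : ℝ) : ℂ))) with hE
  set G : ℝ → ℂ := fun x => E x * Δ x with hGdef
  have hΔcont : Continuous Δ := by
    rw [hΔdef]
    exact continuous_finset_sum _ fun l _ => continuous_const.mul (continuous_eMode a b l)
  have hEmeas : AEStronglyMeasurable E (volume.restrict (Set.Ioc a b)) := by
    rw [hE]
    refine Measurable.aestronglyMeasurable ?_
    exact Complex.measurable_exp.comp
      (((Complex.measurable_ofReal.comp (hV.const_mul τ)).const_mul Complex.I).neg)
  have hEnorm : ∀ x : ℝ, ‖E x‖ = 1 := fun x => norm_exp_neg_I _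
  -- linearity of the discrete coefficients
  have hdl : ∀ l : ℤ, d l
      = discreteCoeff a b N (nlPhase β τ v) l - discreteCoeff a b N (nlPhase β τ w) l := by
    intro l
    rw [hd]
    unfold GPE.discreteCoeff
    simp only [hg0, sub_mul, Finset.sum_sub_distrib, mul_sub]
  -- interpolation difference
  have hΔeq : ∀ x : ℝ,
      interpN a b N (nlPhase β τ v) x - interpN a b N (nlPhase β τ w) x = Δ x := by
    intro x
    rw [hΔdef]
    unfold GPE.interpN
    rw [← Finset.sum_sub_distrib]
    exact Finset.sum_congr rfl fun l _ => by rw [hdl l, sub_mul]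
  -- integrability of modes against the bounded measurable factor
  have hinterp_bd : ∀ (c' : ℤ → ℂ) (x : ℝ),
      ‖∑ m ∈ idxSet N, c' m * eMode a b m x‖ ≤ ∑ m ∈ idxSet N, ‖c' m‖ := by
    intro c' x
    refine le_trans (norm_sum_le _ _) (Finset.sum_le_sum fun m _ => ?_)
    rw [norm_mul, norm_eMode, mul_one]
  have hmix_int : ∀ (c' : ℤ → ℂ) (l : ℤ), IntervalIntegrable
      (fun x => (E x * ∑ m ∈ idxSet N, c' m * eMode a b m x) *
        Complex.exp (-(Complex.I * ((freq a b l * (x - a) : ℝ) : ℂ)))) volume a b := by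
    intro c' l
    have hcont : Continuous (fun x => ∑ m ∈ idxSet N, c' m * eMode a b m x) :=
      continuous_finset_sum _ fun m _ => continuous_const.mul (continuous_eMode a b m)
    refine intervalIntegrable_of_bdd a b hab.le
      (((hEmeas.mul hcont.aestronglyMeasurable).mul
        (continuous_negMode a b l).aestronglyMeasurable)) (∑ m ∈ idxSet N, ‖c' m‖)
      fun x _ => ?_
    rw [norm_mul, norm_mul, hEnorm, one_mul, norm_exp_neg_I, mul_one]
    exact hinterp_bd c' x
  -- Fourier coefficient linearity
  have hfc : ∀ l : ℤ,
      GPE.fourierCoeffOn a b (fun x => E x * interpN a b N (nlPhase β τ v) x) l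
        - GPE.fourierCoeffOn a b (fun x => E x * interpN a b N (nlPhase β τ w) x) l
      = GPE.fourierCoeffOn a b G l := by
    intro l
    unfold GPE.fourierCoeffOn
    rw [← mul_sub]
    congr 1
    simp only [GPE.interpN]
    rw [← intervalIntegral.integral_sub (hmix_int _ l) (hmix_int _ l)]
    refine intervalIntegral.integral_congr fun x _ => ?_
    simp only [hGdef]
    rw [← hΔeq x]
    simp only [GPE.interpN]
    ring
  -- difference of the numerical flows
  have hPhiDiff : ∀ x : ℝ,
      PhiLTeFP a b N V β τ v x - PhiLTeFP a b N V β τ w x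
      = ∑ l ∈ idxSet N,
          (Complex.exp (-(Complex.I * ((τ * freq a b l ^ 2 : ℝ) : ℂ))) *
            GPE.fourierCoeffOn a b G l) * eMode a b l x := by
    intro x
    unfold GPE.PhiLTeFP GPE.freeFlow
    rw [← Finset.sum_sub_distrib]
    refine Finset.sum_congr rfl fun l _ => ?_
    rw [← hfc l]
    ring
  -- L² norm of the difference
  have hnum : (∫ x in a..b, ‖PhiLTeFP a b N V β τ v x - PhiLTeFP a b N V β τ w x‖^2)
      = (b - a) * ∑ l ∈ idxSet N, ‖GPE.fourierCoeffOn a b G l‖^2 := by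
    simp only [hPhiDiff]
    rw [integral_sq_trig a b hab N]
    congr 1
    refine Finset.sum_congr rfl fun l _ => ?_
    rw [norm_mul, norm_exp_neg_I, one_mul]
  -- Bessel
  have hGK : ∀ x ∈ Set.Ioc a b, ‖G x‖ ≤ ∑ l ∈ idxSet N, ‖d l‖ := by
    intro x _
    rw [hGdef]
    simp only
    rw [norm_mul, hEnorm, one_mul, hΔdef]
    exact hinterp_bd d x
  have hBessel : (b - a) * ∑ l ∈ idxSet N, ‖GPE.fourierCoeffOn a b G l‖^2
      ≤ ∫ x in a..b, ‖G x‖^2 :=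
    bessel a b hab N G (hEmeas.mul hΔcont.aestronglyMeasurable) _ hGK
  have hGΔ : (∫ x in a..b, ‖G x‖^2) = ∫ x in a..b, ‖Δ x‖^2 := by
    refine intervalIntegral.integral_congr fun x _ => ?_
    rw [hGdef]
    simp only
    rw [norm_mul, hEnorm, one_mul]
  have hΔint : (∫ x in a..b, ‖Δ x‖^2) = (b - a) * ∑ l ∈ idxSet N, ‖d l‖^2 := by
    rw [hΔdef]
    exact integral_sq_trig a b hab N d
  have hP1 : ∑ l ∈ idxSet N, ‖d l‖^2
      = (N:ℝ)⁻¹ * ∑ j ∈ Finset.range N, ‖g0 (gridPt a b N j)‖^2 := by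
    rw [hd]
    exact discParseval a b hab N hN hNe g0
  -- grid points lie in [a,b]
  have hgrid : ∀ j ∈ Finset.range N, gridPt a b N j ∈ Set.Icc a b := by
    intro j hj
    simp only [Finset.mem_range] at hj
    unfold GPE.gridPt
    constructor
    · have : (0:ℝ) ≤ j * ((b - a)/N) := by positivity
      linarith
    · have hjN : (j:ℝ) ≤ N := by exact_mod_cast hj.le
      have h1 : (j:ℝ) * ((b - a)/N) ≤ N * ((b - a)/N) := by
        apply mul_le_mul_of_nonneg_right hjN
        positivity
      have h2 : (N:ℝ) * ((b - a)/N) = b - a := by field_simp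
      linarith
  -- pointwise Lipschitz estimate at grid points
  have hlipj : ∀ j ∈ Finset.range N,
      ‖g0 (gridPt a b N j)‖^2
        ≤ (1 + c0 * τ)^2 * ‖v (gridPt a b N j) - w (gridPt a b N j)‖^2 := by
    intro j hj
    have hx := hgrid j hj
    have h1 : ‖g0 (gridPt a b N j)‖
        ≤ (1 + c0 * τ) * ‖v (gridPt a b N j) - w (gridPt a b N j)‖ := by
      rw [hg0]
      simp only
      unfold GPE.nlPhase
      have := nl_lip β τ M hτ.le (v (gridPt a b N j)) (w (gridPt a b N j))
        (hvM _ hx)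
        (hwM _ hx)
      calc ‖v (gridPt a b N j) *
            Complex.exp (-(Complex.I * ((τ * β * ‖v (gridPt a b N j)‖ ^ 2 : ℝ) : ℂ)))
          - w (gridPt a b N j) *
            Complex.exp (-(Complex.I * ((τ * β * ‖w (gridPt a b N j)‖ ^ 2 : ℝ) : ℂ)))‖
          ≤ (1 + 4 * |β| * M^2 * τ) * ‖v (gridPt a b N j) - w (gridPt a b N j)‖ := this
        _ = (1 + c0 * τ) * ‖v (gridPt a b N j) - w (gridPt a b N j)‖ := by rw [hc0]
    calc ‖g0 (gridPt a b N j)‖^2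
        ≤ ((1 + c0 * τ) * ‖v (gridPt a b N j) - w (gridPt a b N j)‖)^2 := by
          apply sq_le_sq'
          · have h2 : (0:ℝ) ≤ (1 + c0 * τ) * ‖v (gridPt a b N j) - w (gridPt a b N j)‖ := by
              positivity
            linarith [norm_nonneg (g0 (gridPt a b N j))]
          · exact h1
      _ = (1 + c0 * τ)^2 * ‖v (gridPt a b N j) - w (gridPt a b N j)‖^2 := by ring
  -- difference v - w as a trigonometric polynomial
  have hvw : ∀ x : ℝ, v x - w x = ∑ l ∈ idxSet N, (cv l - cw l) * eMode a b l x := by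
    intro x
    rw [hcv, hcw, ← Finset.sum_sub_distrib]
    exact Finset.sum_congr rfl fun l _ => (sub_mul _ _ _).symm
  have hP2 : (N:ℝ)⁻¹ * ∑ j ∈ Finset.range N, ‖v (gridPt a b N j) - w (gridPt a b N j)‖^2
      = ∑ l ∈ idxSet N, ‖cv l - cw l‖^2 := by
    have := discParsevalXN a b hab N hN (fun l => cv l - cw l)
    rw [← this]
    congr 1
    exact Finset.sum_congr rfl fun j _ => by rw [hvw]
  have hL5vw : (∫ x in a..b, ‖v x - w x‖^2)
      = (b - a) * ∑ l ∈ idxSet N, ‖cv l - cw l‖^2 := by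
    have h6 : ∀ x : ℝ, ‖v x - w x‖^2
        = ‖∑ l ∈ idxSet N, (cv l - cw l) * eMode a b l x‖^2 := fun x => by rw [hvw]
    simp only [h6]
    exact integral_sq_trig a b hab N _
  -- the full chain
  have hchain : (∫ x in a..b, ‖PhiLTeFP a b N V β τ v x - PhiLTeFP a b N V β τ w x‖^2)
      ≤ (1 + c0 * τ)^2 * ∫ x in a..b, ‖v x - w x‖^2 := by
    rw [hnum, hL5vw]
    calc (b - a) * ∑ l ∈ idxSet N, ‖GPE.fourierCoeffOn a b G l‖^2
        ≤ ∫ x in a..b, ‖G x‖^2 := hBessel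
      _ = (b - a) * ∑ l ∈ idxSet N, ‖d l‖^2 := by rw [hGΔ, hΔint]
      _ = (b - a) * ((N:ℝ)⁻¹ * ∑ j ∈ Finset.range N, ‖g0 (gridPt a b N j)‖^2) := by rw [hP1]
      _ ≤ (b - a) * ((N:ℝ)⁻¹ * ((1 + c0 * τ)^2 *
            ∑ j ∈ Finset.range N, ‖v (gridPt a b N j) - w (gridPt a b N j)‖^2)) := by
          apply mul_le_mul_of_nonneg_left _ hL.le
          apply mul_le_mul_of_nonneg_left _ (by positivity)
          rw [Finset.mul_sum]
          exact Finset.sum_le_sum hlipj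
      _ = (1 + c0 * τ)^2 * ((b - a) *
            ((N:ℝ)⁻¹ * ∑ j ∈ Finset.range N, ‖v (gridPt a b N j) - w (gridPt a b N j)‖^2)) := by
          ring
      _ = (1 + c0 * τ)^2 * ((b - a) * ∑ l ∈ idxSet N, ‖cv l - cw l‖^2) := by rw [hP2]
  -- finish with square roots
  unfold GPE.sobNorm
  simp only [zero_add, Finset.range_one, Finset.sum_singleton, iteratedDeriv_zero]
  have h7 : (0:ℝ) ≤ ∫ x in a..b, ‖v x - w x‖^2 :=
    intervalIntegral.integral_nonneg hab.le fun x _ => sq_nonneg _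
  have h8 : (0:ℝ) ≤ 1 + c0 * τ := by positivity
  calc Real.sqrt (∫ x in a..b, ‖PhiLTeFP a b N V β τ v x - PhiLTeFP a b N V β τ w x‖^2)
      ≤ Real.sqrt ((1 + c0 * τ)^2 * ∫ x in a..b, ‖v x - w x‖^2) :=
        Real.sqrt_le_sqrt hchain
    _ = (1 + c0 * τ) * Real.sqrt (∫ x in a..b, ‖v x - w x‖^2) := by
        rw [Real.sqrt_mul (sq_nonneg _), Real.sqrt_sq h8]
    _ ≤ (1 + (4 * |β| * M^2 + 1) * τ) * Real.sqrt (∫ x in a..b, ‖v x - w x‖^2) := by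
        apply mul_le_mul_of_nonneg_right _ (Real.sqrt_nonneg _)
        rw [hc0]
        nlinarith
end ContOrth
end
end

section
/- Let β ∈ ℝ, M ≥ 0 and τ ≥ 0. Then for all complex numbers z, w with |z| ≤ M and |w| ≤ M, one has | z e^{−iτβ|z|²} − w e^{−iτβ|w|²} | ≤ (1 + 2|β|M²τ) |z − w|. -/
lemma exp_mul_I_lipschitz (a b : ℝ) :
    ‖Complex.exp ((a : ℂ) * Complex.I) - Complex.exp ((b : ℂ) * Complex.I)‖
      ≤ |a - b| := by
  have hd : ∀ t : ℝ, HasDerivAt (fun s : ℝ => Complex.exp ((s : ℂ) * Complex.I))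
      (Complex.exp ((t : ℂ) * Complex.I) * Complex.I) t := by
    intro t
    have h1 : HasDerivAt (fun s : ℝ => (s : ℂ) * Complex.I) Complex.I t := by
      simpa using (Complex.ofRealCLM.hasDerivAt (x := t)).mul_const Complex.I
    simpa using h1.cexp
  have := Convex.norm_image_sub_le_of_norm_hasDerivWithin_le
    (f := fun s : ℝ => Complex.exp ((s : ℂ) * Complex.I))
    (f' := fun t : ℝ => Complex.exp ((t : ℂ) * Complex.I) * Complex.I)
    (s := Set.univ) (C := 1)
    (fun t _ => (hd t).hasDerivWithinAt)
    (fun t _ => by simp [Complex.norm_exp]) convex_univ (Set.mem_univ b) (Set.mem_univ a)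
  simpa [Real.norm_eq_abs] using this

/-- Pointwise Lipschitz estimate for the nonlinear phase map z ↦ z e^{−iτβ|z|²}:
for |z|, |w| ≤ M and τ ≥ 0,
|z e^{−iτβ|z|²} − w e^{−iτβ|w|²}| ≤ (1 + 2|β|M²τ)|z − w|. -/
theorem nonlinear_phase_lipschitz (β M τ : ℝ) (hM : 0 ≤ M) (hτ : 0 ≤ τ)
    (z w : ℂ) (hz : ‖z‖ ≤ M) (hw : ‖w‖ ≤ M) :
    ‖(z * Complex.exp (-(Complex.I * ((τ * β * ‖z‖ ^ 2 : ℝ) : ℂ)))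
          - w * Complex.exp (-(Complex.I * ((τ * β * ‖w‖ ^ 2 : ℝ) : ℂ))))‖
      ≤ (1 + 2 * |β| * M ^ 2 * τ) * ‖z - w‖ := by
  set a : ℝ := -(τ * β * ‖z‖ ^ 2) with ha
  set b : ℝ := -(τ * β * ‖w‖ ^ 2) with hb
  have hea : -(Complex.I * ((τ * β * ‖z‖ ^ 2 : ℝ) : ℂ)) = (a : ℂ) * Complex.I := by
    push_cast [ha]; ring
  have heb : -(Complex.I * ((τ * β * ‖w‖ ^ 2 : ℝ) : ℂ)) = (b : ℂ) * Complex.I := by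
    push_cast [hb]; ring
  rw [hea, heb]
  set ez := Complex.exp ((a : ℂ) * Complex.I)
  set ew := Complex.exp ((b : ℂ) * Complex.I)
  have hez : ‖ez‖ = 1 := by simp [ez, Complex.norm_exp]
  have key : z * ez - w * ew = (z - w) * ez + w * (ez - ew) := by ring
  rw [key]
  have h1 : ‖(z - w) * ez‖ = ‖z - w‖ := by
    rw [norm_mul, hez, mul_one]
  have h2 : ‖w * (ez - ew)‖ ≤ M * |a - b| := by
    rw [norm_mul]
    exact mul_le_mul hw (exp_mul_I_lipschitz a b) (by positivity) hM
  have hab : |a - b| ≤ τ * |β| * (2 * M) * ‖z - w‖ := by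
    have h3 : |‖z‖ - ‖w‖| ≤ ‖z - w‖ :=
      abs_norm_sub_norm_le z w
    have h4 : a - b = τ * β * ((‖z‖ + ‖w‖) * (‖w‖ - ‖z‖)) := by
      rw [ha, hb]; ring
    rw [h4, abs_mul, abs_mul, abs_mul, abs_of_nonneg hτ]
    have h5 : |‖z‖ + ‖w‖| ≤ 2 * M := by
      rw [abs_of_nonneg (by positivity)]; linarith
    have h6 : |‖w‖ - ‖z‖| ≤ ‖z - w‖ := by
      rw [abs_sub_comm]; exact h3
    have := mul_le_mul h5 h6 (abs_nonneg _) (by positivity)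
    calc τ * |β| * (|‖z‖ + ‖w‖| * |‖w‖ - ‖z‖|)
        ≤ τ * |β| * (2 * M * ‖z - w‖) := by
          apply mul_le_mul_of_nonneg_left this (by positivity)
      _ = τ * |β| * (2 * M) * ‖z - w‖ := by ring
  calc ‖(z - w) * ez + w * (ez - ew)‖
      ≤ ‖(z - w) * ez‖ + ‖w * (ez - ew)‖ := norm_add_le _ _
    _ ≤ ‖z - w‖ + M * (τ * |β| * (2 * M) * ‖z - w‖) := by
        rw [h1]
        exact add_le_add le_rfl (h2.trans (mul_le_mul_of_nonneg_left hab hM))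
    _ = (1 + 2 * |β| * M ^ 2 * τ) * ‖z - w‖ := by ring
end
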